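/- arXiv:2409.00995 — 4 statements merged into one kernel-verified Lean document; each statement's English description precedes it below -/
import Mathlib

section
/- Let balls be placed independently into urns labeled 1,2,3,..., with each ball going into urn k with probability p_k > 0, where Σ p_k = 1. Suppose there is a constant C > 0 with p_m ≤ C · p_{m+1} for all m ≥ 1. Let F_k be the number of balls in urn k after n balls are placed, and X_n = max{k : F_k > 0}. Then there exists c > 0 (depending only on C) such that for all m, h ≥ 1, P(F_m = h and X_n = m) ≤ exp(−c·h). -/
open MeasureTheory
open scoped ENNReal NNReal

/-- `urnCount n ω k` is the number of balls (out of `n`) placed in urn `k`,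
when `ω i` is the urn of ball `i`. -/
noncomputable def urnCount (n : ℕ) (ω : Fin n → ℕ) (k : ℕ) : ℕ :=
  Set.ncard {i : Fin n | ω i = k}

/-- Binomial-type bound in `ℝ≥0∞`: one term is at most the whole binomial sum. -/
lemma choose_mul_pow_le (x y : ℝ≥0∞) (n h : ℕ) (hhn : h ≤ n) :
    (n.choose h : ℝ≥0∞) * x ^ h * y ^ (n - h) ≤ (x + y) ^ n := by
  rw [add_pow]
  have hmem : h ∈ Finset.range (n + 1) := Finset.mem_range.2 (Nat.lt_succ_of_le hhn)
  calc (n.choose h : ℝ≥0∞) * x ^ h * y ^ (n - h)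
      = x ^ h * y ^ (n - h) * (n.choose h : ℝ≥0∞) := by ring
    _ ≤ ∑ k ∈ Finset.range (n + 1), x ^ k * y ^ (n - k) * (n.choose k : ℝ≥0∞) :=
        Finset.single_le_sum (f := fun k => x ^ k * y ^ (n - k) * (n.choose k : ℝ≥0∞))
          (fun k _ => zero_le) hmem

/-- Urn model: `n` balls are placed independently, each in urn `k` with probability `p k > 0`
(for `k ≥ 1`).  If `p m ≤ C * p (m+1)` for all `m ≥ 1`, then there is `c > 0`
(depending only on `C`) such that for all `m, h ≥ 1`,
`P(F_m = h and X_n = m) ≤ exp (-c * h)`, where `F_k` is the number of balls in urn `k`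
and `X_n = max {k | F_k > 0}`. -/
theorem stmt0 (C : NNReal) (hC : 0 < C) :
    ∃ c : ℝ, 0 < c ∧
      ∀ (p : PMF ℕ), p 0 = 0 → (∀ k, 1 ≤ k → p k ≠ 0) →
        (∀ m, 1 ≤ m → p m ≤ C * p (m + 1)) →
        ∀ (n m h : ℕ), 1 ≤ m → 1 ≤ h →
          (Measure.pi fun _ : Fin n => p.toMeasure)
              {ω | urnCount n ω m = h ∧ 0 < urnCount n ω m ∧ ∀ k, m < k → urnCount n ω k = 0}
            ≤ ENNReal.ofReal (Real.exp (-c * h)) := by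
  set r : NNReal := C / (C + 1) with hrdef
  have hC1 : (0 : NNReal) < C + 1 := by positivity
  have hrpos : 0 < r := div_pos hC hC1
  have hrlt : r < 1 := by
    rw [hrdef, div_lt_one hC1]
    exact lt_add_of_pos_right C one_pos
  have hrRpos : (0 : ℝ) < (r : ℝ) := hrpos
  have hrRlt : (r : ℝ) < 1 := hrlt
  refine ⟨-Real.log (r : ℝ), by simpa using Real.log_neg hrRpos hrRlt, ?_⟩
  intro p hp0 hppos hpC n m h hm hh
  -- the target equals (r : ℝ≥0∞) ^ h
  have htarget : ENNReal.ofReal (Real.exp (-(-Real.log (r : ℝ)) * h)) = (r : ℝ≥0∞) ^ h := by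
    rw [neg_neg, mul_comm, Real.exp_nat_mul, Real.exp_log hrRpos,
      ENNReal.ofReal_pow hrRpos.le, ENNReal.ofReal_coe_nnreal]
  rw [htarget]
  set μ := p.toMeasure with hμ
  set E : Set (Fin n → ℕ) :=
    {ω | urnCount n ω m = h ∧ 0 < urnCount n ω m ∧ ∀ k, m < k → urnCount n ω k = 0} with hE
  by_cases hhn : h ≤ n
  · -- main case
    set a : ℝ≥0∞ := μ {m} with ha
    set b : ℝ≥0∞ := μ {x | x < m} with hb
    set q : ℝ≥0∞ := μ {x | m < x} with hq
    -- the per-S cylinder sets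
    set A : Finset (Fin n) → Set (Fin n → ℕ) :=
      fun S => Set.pi Set.univ (fun i => if i ∈ S then ({m} : Set ℕ) else {x | x < m}) with hA
    have hsub : E ⊆ ⋃ S ∈ Finset.powersetCard h (Finset.univ : Finset (Fin n)), A S := by
      intro ω hω
      obtain ⟨hcount, -, htop⟩ := hω
      set S : Finset (Fin n) := Finset.univ.filter (fun i => ω i = m) with hS
      have hScoe : ({i : Fin n | ω i = m} : Set (Fin n)) = ↑S := by
        ext i; simp [hS]
      have hScard : S.card = h := by
        have := hcount
        rw [urnCount, hScoe, Set.ncard_coe_finset] at this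
        exact this
      refine Set.mem_biUnion (Finset.mem_powersetCard.2 ⟨Finset.subset_univ _, hScard⟩) ?_
      intro i _
      by_cases hiS : i ∈ S
      · simp only [hiS, if_true]
        simpa [hS] using hiS
      · simp only [hiS, if_false]
        have hne : ω i ≠ m := by simpa [hS] using hiS
        have hle : ω i ≤ m := by
          by_contra hgt
          push_neg at hgt
          have h0 : urnCount n ω (ω i) = 0 := htop _ hgt
          have : 0 < urnCount n ω (ω i) :=
            (Set.ncard_pos (Set.toFinite _)).2 ⟨i, rfl⟩
          omega
        exact lt_of_le_of_ne hle hne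
    have hAS : ∀ S ∈ Finset.powersetCard h (Finset.univ : Finset (Fin n)),
        (Measure.pi fun _ : Fin n => μ) (A S) = a ^ h * b ^ (n - h) := by
      intro S hSmem
      obtain ⟨-, hScard⟩ := Finset.mem_powersetCard.1 hSmem
      rw [hA]
      rw [Measure.pi_pi]
      have : ∀ i : Fin n, μ (if i ∈ S then ({m} : Set ℕ) else {x | x < m})
          = if i ∈ S then a else b := by
        intro i; by_cases hi : i ∈ S <;> simp [hi, ha, hb]
      rw [Finset.prod_congr rfl (fun i _ => this i)]
      rw [Finset.prod_ite, Finset.prod_const, Finset.prod_const,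
        Finset.filter_univ_mem, hScard]
      congr 2
      rw [Finset.filter_not, Finset.card_sdiff_of_subset (Finset.filter_subset _ _),
        Finset.filter_univ_mem, hScard, Finset.card_univ, Fintype.card_fin]
    have hbound : (Measure.pi fun _ : Fin n => μ) E
        ≤ (n.choose h : ℝ≥0∞) * a ^ h * b ^ (n - h) := by
      calc (Measure.pi fun _ : Fin n => μ) E
          ≤ (Measure.pi fun _ : Fin n => μ)
              (⋃ S ∈ Finset.powersetCard h (Finset.univ : Finset (Fin n)), A S) :=
            measure_mono hsub
        _ ≤ ∑ S ∈ Finset.powersetCard h (Finset.univ : Finset (Fin n)),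
              (Measure.pi fun _ : Fin n => μ) (A S) := measure_biUnion_finset_le _ _
        _ = ∑ S ∈ Finset.powersetCard h (Finset.univ : Finset (Fin n)),
              a ^ h * b ^ (n - h) := Finset.sum_congr rfl hAS
        _ = (n.choose h : ℝ≥0∞) * (a ^ h * b ^ (n - h)) := by
            rw [Finset.sum_const, nsmul_eq_mul, Finset.card_powersetCard, Finset.card_univ,
              Fintype.card_fin]
        _ = (n.choose h : ℝ≥0∞) * a ^ h * b ^ (n - h) := by ring
    refine hbound.trans ?_
    -- key inequality : a ≤ r * (a + q)
    have haq : a ≤ (r : ℝ≥0∞) * (a + q) := by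
      have hCq : a ≤ (C : ℝ≥0∞) * q := by
        have h1 : a = p m := by
          rw [ha, hμ, PMF.toMeasure_apply_singleton _ _ (measurableSet_singleton m)]
        have h2 : p (m + 1) ≤ q := by
          have : μ {m+1} ≤ μ {x | m < x} :=
            measure_mono (fun x hx => by
              simp only [Set.mem_singleton_iff] at hx
              simp only [Set.mem_setOf_eq]
              omega)
          rw [hμ, PMF.toMeasure_apply_singleton _ _ (measurableSet_singleton (m+1))] at this
          exact this
        calc a = p m := h1
          _ ≤ (C : ℝ≥0∞) * p (m + 1) := hpC m hm
          _ ≤ (C : ℝ≥0∞) * q := by gcongr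
      have hkey : a * ((C : ℝ≥0∞) + 1) ≤ (C : ℝ≥0∞) * (a + q) := by
        rw [mul_add, mul_add, mul_one, mul_comm a (C : ℝ≥0∞)]
        gcongr
      have hne0 : ((C : ℝ≥0∞) + 1) ≠ 0 := by simp
      have hnetop : ((C : ℝ≥0∞) + 1) ≠ ⊤ := by
        simp [ENNReal.add_ne_top]
      have := ENNReal.div_le_div_right hkey ((C : ℝ≥0∞) + 1)
      rw [mul_div_assoc, ENNReal.div_self hne0 hnetop, mul_one] at this
      have heq : (C : ℝ≥0∞) * (a + q) / ((C : ℝ≥0∞) + 1) = (r : ℝ≥0∞) * (a + q) := by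
        rw [hrdef, ENNReal.coe_div hC1.ne', ENNReal.coe_add, ENNReal.coe_one,
          div_eq_mul_inv, div_eq_mul_inv]
        ring
      rw [heq] at this
      exact this
    have habq : a + q + b ≤ 1 := by
      have hd1 : Disjoint ({m} : Set ℕ) {x | m < x} := by
        simp only [Set.disjoint_left]; intro x hx; simp_all
      have hd2 : Disjoint (({m} : Set ℕ) ∪ {x | m < x}) {x | x < m} := by
        simp only [Set.disjoint_left]; intro x hx; simp_all
        rcases hx with hx | hx <;> omega
      have e1 : a + q = μ (({m} : Set ℕ) ∪ {x | m < x}) := by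
        rw [ha, hq, measure_union hd1 (by measurability)]
      have e2 : a + q + b = μ ((({m} : Set ℕ) ∪ {x | m < x}) ∪ {x | x < m}) := by
        rw [measure_union hd2 (by measurability), ← e1, hb]
      rw [e2]
      exact prob_le_one
    calc (n.choose h : ℝ≥0∞) * a ^ h * b ^ (n - h)
        ≤ (n.choose h : ℝ≥0∞) * ((r : ℝ≥0∞) * (a + q)) ^ h * b ^ (n - h) := by gcongr
      _ = (r : ℝ≥0∞) ^ h * ((n.choose h : ℝ≥0∞) * (a + q) ^ h * b ^ (n - h)) := by
          rw [mul_pow]; ring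
      _ ≤ (r : ℝ≥0∞) ^ h * ((a + q) + b) ^ n := by
          gcongr
          exact choose_mul_pow_le _ _ n h hhn
      _ ≤ (r : ℝ≥0∞) ^ h * 1 ^ n := by gcongr
      _ = (r : ℝ≥0∞) ^ h := by rw [one_pow, mul_one]
  · -- h > n : the event is empty
    have : E = ∅ := by
      ext ω
      simp only [hE, Set.mem_setOf_eq, Set.mem_empty_iff_false, iff_false]
      rintro ⟨hcount, -, -⟩
      have : urnCount n ω m ≤ n := by
        rw [urnCount]
        calc Set.ncard {i : Fin n | ω i = m} ≤ Set.ncard (Set.univ : Set (Fin n)) :=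
          Set.ncard_le_ncard (Set.subset_univ _) Set.finite_univ
        _ = n := by simp [Set.ncard_univ]
      omega
    rw [this]
    simp
end

section
/- In the urn model, fix m > 0 and integers 0 < g_m < f_m < m and J_m > 0. Suppose there is a constant C > 0 such that p_k ≤ C·p_l for all k ∈ (m − g_m, m] and l ∈ (m − f_m, m − g_m]. Then for every j ∈ ℕ, the conditional probability P( Σ_{k=m−g_m+1}^{m} F_k = j+1 | X_n = m, Σ_{k=m−f_m+1}^{m} F_k ≤ J_m ) is at most C' · (g_m/f_m)^j · J_m^j for a constant C' depending only on C and j. -/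
open MeasureTheory ProbabilityTheory

open scoped ENNReal NNReal

namespace UrnAux

def Sset (n m f J : ℕ) : Set (Fin n → ℕ) :=
  {ω | (0 < urnCount n ω m ∧ ∀ k, m < k → urnCount n ω k = 0) ∧
        ∑ k ∈ Finset.Icc (m - f + 1) m, urnCount n ω k ≤ J}

def Tset (n m g j : ℕ) : Set (Fin n → ℕ) :=
  {ω | ∑ k ∈ Finset.Icc (m - g + 1) m, urnCount n ω k = j + 1}

def Iset (n m g : ℕ) (ω : Fin n → ℕ) : Finset (Fin n) :=
  Finset.univ.filter fun i => ω i ∈ Finset.Icc (m - g + 1) m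

noncomputable def Mset (n m g : ℕ) (ω : Fin n → ℕ) : Finset (Fin n) :=
  if h : (Finset.univ.filter fun i => ω i = m).Nonempty then
    (Iset n m g ω).erase ((Finset.univ.filter fun i => ω i = m).min' h)
  else ∅

noncomputable def Phi (n m g : ℕ) (ω v : Fin n → ℕ) : Fin n → ℕ := fun i =>
  if i ∈ Mset n m g ω then v i else ω i

noncomputable def adm (n m g f : ℕ) (ω : Fin n → ℕ) : Finset (Fin n → ℕ) :=
  Fintype.piFinset fun i => if i ∈ Mset n m g ω then Finset.Icc (m - f + 1) (m - g) else {0}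

variable {n m g f J j : ℕ} {ω v : Fin n → ℕ}

lemma urnCount_eq_card (n : ℕ) (ω : Fin n → ℕ) (k : ℕ) :
    urnCount n ω k = (Finset.univ.filter fun i => ω i = k).card := by
  rw [urnCount, ← Set.ncard_coe_finset]
  congr 1
  ext i
  simp

lemma sum_urnCount (n : ℕ) (ω : Fin n → ℕ) (K : Finset ℕ) :
    ∑ k ∈ K, urnCount n ω k = (Finset.univ.filter fun i => ω i ∈ K).card := by
  rw [Finset.card_eq_sum_card_fiberwise (f := ω) (s := Finset.univ.filter fun i => ω i ∈ K) (t := K)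
    (fun x hx => (Finset.mem_filter.mp hx).2)]
  refine Finset.sum_congr rfl fun k hk => ?_
  rw [urnCount_eq_card]
  congr 1
  ext i
  simp only [Finset.mem_filter, Finset.mem_univ, true_and]
  exact ⟨fun h => ⟨h ▸ hk, h⟩, fun h => h.2⟩

lemma filter_nonempty (hpos : 0 < urnCount n ω m) :
    (Finset.univ.filter fun i => ω i = m).Nonempty := by
  rw [← Finset.card_pos, ← urnCount_eq_card]; exact hpos

lemma Mset_subset : Mset n m g ω ⊆ Iset n m g ω := by
  rw [Mset]
  split
  · exact Finset.erase_subset _ _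
  · exact Finset.empty_subset _

lemma mem_Iset {i : Fin n} : i ∈ Iset n m g ω ↔ ω i ∈ Finset.Icc (m - g + 1) m := by
  simp [Iset]

lemma exists_keep (hpos : 0 < urnCount n ω m) :
    ∃ i₀ : Fin n, ω i₀ = m ∧ i₀ ∉ Mset n m g ω := by
  have hne := filter_nonempty hpos
  refine ⟨(Finset.univ.filter fun i => ω i = m).min' hne, ?_, ?_⟩
  · exact (Finset.mem_filter.mp (Finset.min'_mem _ hne)).2
  · rw [Mset, dif_pos hne]
    exact Finset.notMem_erase _ _

lemma card_Mset (hg : 0 < g) (hm : 0 < m)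
    (hpos : 0 < urnCount n ω m) (hT : ω ∈ Tset n m g j) :
    (Mset n m g ω).card = j := by
  have hne := filter_nonempty hpos
  have hI : (Iset n m g ω).card = j + 1 := by
    rw [Iset, ← sum_urnCount]; exact hT
  have hi₀ : (Finset.univ.filter fun i => ω i = m).min' hne ∈ Iset n m g ω := by
    rw [mem_Iset, (Finset.mem_filter.mp (Finset.min'_mem _ hne)).2, Finset.mem_Icc]
    omega
  rw [Mset, dif_pos hne, Finset.card_erase_of_mem hi₀, hI]; omega

lemma card_Icc_sub (hgf : g < f) (hfm : f ≤ m) :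
    (Finset.Icc (m - f + 1) (m - g)).card = f - g := by
  rw [Nat.card_Icc]; omega

lemma card_adm (hgf : g < f) (hfm : f ≤ m) (hM : (Mset n m g ω).card = j) :
    (adm n m g f ω).card = (f - g) ^ j := by
  classical
  rw [adm, Fintype.card_piFinset]
  calc ∏ i : Fin n, (if i ∈ Mset n m g ω then Finset.Icc (m - f + 1) (m - g) else {0}).card
      = ∏ i : Fin n, (if i ∈ Mset n m g ω then f - g else 1) := by
        refine Finset.prod_congr rfl fun i _ => ?_
        split
        · exact card_Icc_sub hgf hfm
        · simp
    _ = (f - g) ^ j := by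
        rw [Fintype.prod_ite_mem, Finset.prod_const, hM]

lemma mem_adm_of_mem {i : Fin n} (hv : v ∈ adm n m g f ω) (hi : i ∈ Mset n m g ω) :
    v i ∈ Finset.Icc (m - f + 1) (m - g) := by
  have := Fintype.mem_piFinset.mp hv i
  rwa [if_pos hi] at this

lemma mem_adm_of_not_mem {i : Fin n} (hv : v ∈ adm n m g f ω) (hi : i ∉ Mset n m g ω) :
    v i = 0 := by
  have := Fintype.mem_piFinset.mp hv i
  rw [if_neg hi] at this
  simpa using this

lemma prod_le (p : PMF ℕ) (C : NNReal)
    (hp : ∀ k l : ℕ, m - g < k → k ≤ m → m - f < l → l ≤ m - g → p k ≤ C * p l)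
    (hM : (Mset n m g ω).card = j) (hv : v ∈ adm n m g f ω) :
    ∏ i, p (ω i) ≤ (C : ℝ≥0∞) ^ j * ∏ i, p (Phi n m g ω v i) := by
  classical
  have h1 : ∀ i ∈ Mset n m g ω, p (ω i) ≤ (C : ℝ≥0∞) * p (v i) := by
    intro i hi
    have hωA := Finset.mem_Icc.mp (mem_Iset.mp (Mset_subset hi))
    have hvD := Finset.mem_Icc.mp (mem_adm_of_mem hv hi)
    exact hp (ω i) (v i) (by omega) hωA.2 (by omega) hvD.2
  calc ∏ i, p (ω i)
      = (∏ i ∈ Mset n m g ω, p (ω i)) * ∏ i ∈ (Mset n m g ω)ᶜ, p (ω i) :=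
        (Finset.prod_mul_prod_compl _ _).symm
    _ ≤ (∏ i ∈ Mset n m g ω, ((C : ℝ≥0∞) * p (v i))) * ∏ i ∈ (Mset n m g ω)ᶜ, p (ω i) :=
        mul_le_mul_left (Finset.prod_le_prod' h1) _
    _ = (C : ℝ≥0∞) ^ j * ((∏ i ∈ Mset n m g ω, p (v i)) * ∏ i ∈ (Mset n m g ω)ᶜ, p (ω i)) := by
        rw [Finset.prod_mul_distrib, Finset.prod_const, hM, mul_assoc]
    _ = (C : ℝ≥0∞) ^ j * ∏ i, p (Phi n m g ω v i) := by
        congr 1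
        rw [← Finset.prod_mul_prod_compl (Mset n m g ω) (fun i => p (Phi n m g ω v i))]
        congr 1
        · exact Finset.prod_congr rfl fun i hi => by rw [Phi, if_pos hi]
        · exact Finset.prod_congr rfl fun i hi => by
            rw [Phi, if_neg (Finset.mem_compl.mp hi)]

lemma Phi_mem_S (hg : 0 < g) (hgf : g < f) (hfm : f < m)
    (hω : ω ∈ Sset n m f J) (hv : v ∈ adm n m g f ω) :
    Phi n m g ω v ∈ Sset n m f J := by
  classical
  obtain ⟨⟨hpos, habove⟩, hsum⟩ := hω
  obtain ⟨i₀, hi₀m, hi₀M⟩ := exists_keep (g := g) hpos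
  have hPhim : ∀ i, i ∉ Mset n m g ω → Phi n m g ω v i = ω i := fun i hi => if_neg hi
  refine ⟨⟨?_, ?_⟩, ?_⟩
  · rw [urnCount_eq_card, Finset.card_pos]
    exact ⟨i₀, Finset.mem_filter.mpr ⟨Finset.mem_univ _, by rw [hPhim i₀ hi₀M, hi₀m]⟩⟩
  · intro k hk
    rw [urnCount_eq_card, Finset.card_eq_zero, Finset.filter_eq_empty_iff]
    intro i _
    by_cases hi : i ∈ Mset n m g ω
    · have := Finset.mem_Icc.mp (mem_adm_of_mem hv hi)
      rw [Phi, if_pos hi]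
      omega
    · rw [hPhim i hi]
      have h0 := habove k hk
      rw [urnCount_eq_card, Finset.card_eq_zero, Finset.filter_eq_empty_iff] at h0
      exact h0 (Finset.mem_univ i)
  · rw [sum_urnCount] at hsum ⊢
    have : (Finset.univ.filter fun i => Phi n m g ω v i ∈ Finset.Icc (m - f + 1) m)
        = Finset.univ.filter fun i => ω i ∈ Finset.Icc (m - f + 1) m := by
      refine Finset.filter_congr fun i _ => ?_
      by_cases hi : i ∈ Mset n m g ω
      · have hvi := Finset.mem_Icc.mp (mem_adm_of_mem hv hi)
        have hωi := Finset.mem_Icc.mp (mem_Iset.mp (Mset_subset hi))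
        rw [Phi, if_pos hi]
        simp only [Finset.mem_Icc]
        omega
      · rw [hPhim i hi]
    rw [this]
    exact hsum

lemma measure_apply {n : ℕ} (p : PMF ℕ) (A : Set (Fin n → ℕ)) :
    (Measure.pi fun _ : Fin n => p.toMeasure) A = ∑' ω : A, ∏ i, p ((ω : Fin n → ℕ) i) := by
  rw [← MeasureTheory.Measure.tsum_indicator_apply_singleton _ A (A.to_countable.measurableSet),
    ← tsum_subtype A (fun ω => (Measure.pi fun _ : Fin n => p.toMeasure) {ω})]
  refine tsum_congr fun ω => ?_
  rw [← Set.univ_pi_singleton (ω : Fin n → ℕ), Measure.pi_pi]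
  exact Finset.prod_congr rfl fun i _ => p.toMeasure_apply_singleton _ (measurableSet_singleton _)


def Pset (n m g f J j : ℕ) : Set ((Fin n → ℕ) × (Fin n → ℕ)) :=
  {σ | σ.1 ∈ Sset n m f J ∩ Tset n m g j ∧ σ.2 ∈ adm n m g f σ.1}

noncomputable def FPhi (n m g f J j : ℕ) (τ : ↥(Pset n m g f J j)) : Fin n → ℕ :=
  Phi n m g (τ : (Fin n → ℕ) × (Fin n → ℕ)).1 (τ : (Fin n → ℕ) × (Fin n → ℕ)).2

lemma fiber_bound (hg : 0 < g) (hgf : g < f) (hfm : f < m)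
    (ω' : Fin n → ℕ) (hω' : ω' ∈ Sset n m f J) (c : ℝ≥0∞) :
    ∑' _τ : {τ : ↥(Pset n m g f J j) // FPhi n m g f J j τ = ω'}, c
      ≤ (((J * g) ^ j : ℕ) : ℝ≥0∞) * c := by
  classical
  have hcard : ∀ τ : ↥(Pset n m g f J j), (Mset n m g (τ : (Fin n → ℕ) × (Fin n → ℕ)).1).card = j := by
    intro τ
    obtain ⟨⟨hS, hT⟩, -⟩ := τ.2
    exact card_Mset hg (by omega) hS.1.1 hT
  set D : Finset (Fin n) := Finset.univ.filter fun i => ω' i ∈ Finset.Icc (m - f + 1) (m - g)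
    with hD
  have hDJ : D.card ≤ J := by
    have hsub : D ⊆ Finset.univ.filter fun i => ω' i ∈ Finset.Icc (m - f + 1) m := by
      intro i hi
      rw [hD, Finset.mem_filter] at hi
      rw [Finset.mem_filter]
      refine ⟨hi.1, ?_⟩
      have := Finset.mem_Icc.mp hi.2
      rw [Finset.mem_Icc]
      omega
    calc D.card ≤ _ := Finset.card_le_card hsub
      _ = ∑ k ∈ Finset.Icc (m - f + 1) m, urnCount n ω' k := (sum_urnCount n ω' _).symm
      _ ≤ J := hω'.2
  set A : Finset ℕ := Finset.Icc (m - g + 1) m with hA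
  set Fib := {τ : ↥(Pset n m g f J j) // FPhi n m g f J j τ = ω'} with hFib
  let Ψ : Fib → (Fin j → (↥D × ↥A)) := fun τ l =>
    (⟨(Mset n m g (τ.1 : (Fin n → ℕ) × (Fin n → ℕ)).1).orderEmbOfFin (hcard τ.1) l, by
        set e := (Mset n m g (τ.1 : (Fin n → ℕ) × (Fin n → ℕ)).1).orderEmbOfFin (hcard τ.1)
        have he : e l ∈ Mset n m g (τ.1 : (Fin n → ℕ) × (Fin n → ℕ)).1 := Finset.orderEmbOfFin_mem _ _ _
        have h1 : Phi n m g (τ.1 : (Fin n → ℕ) × (Fin n → ℕ)).1 (τ.1 : (Fin n → ℕ) × (Fin n → ℕ)).2 (e l) = ω' (e l) := congrFun τ.2 (e l)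
        rw [Phi, if_pos he] at h1
        rw [hD, Finset.mem_filter]
        exact ⟨Finset.mem_univ _, h1 ▸ mem_adm_of_mem τ.1.2.2 he⟩⟩,
     ⟨(τ.1 : (Fin n → ℕ) × (Fin n → ℕ)).1 ((Mset n m g (τ.1 : (Fin n → ℕ) × (Fin n → ℕ)).1).orderEmbOfFin (hcard τ.1) l), by
        have he : (Mset n m g (τ.1 : (Fin n → ℕ) × (Fin n → ℕ)).1).orderEmbOfFin (hcard τ.1) l
            ∈ Mset n m g (τ.1 : (Fin n → ℕ) × (Fin n → ℕ)).1 := Finset.orderEmbOfFin_mem _ _ _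
        exact mem_Iset.mp (Mset_subset he)⟩)
  have hinj : Function.Injective Ψ := by
    intro τ₁ τ₂ h
    have hfst : ∀ l, ((Mset n m g (τ₁.1 : (Fin n → ℕ) × (Fin n → ℕ)).1).orderEmbOfFin (hcard τ₁.1) l : Fin n)
        = (Mset n m g (τ₂.1 : (Fin n → ℕ) × (Fin n → ℕ)).1).orderEmbOfFin (hcard τ₂.1) l := fun l =>
      congrArg (fun x => ((x.1 : ↥D) : Fin n)) (congrFun h l)
    have hsnd : ∀ l, (τ₁.1 : (Fin n → ℕ) × (Fin n → ℕ)).1 ((Mset n m g (τ₁.1 : (Fin n → ℕ) × (Fin n → ℕ)).1).orderEmbOfFin (hcard τ₁.1) l)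
        = (τ₂.1 : (Fin n → ℕ) × (Fin n → ℕ)).1 ((Mset n m g (τ₂.1 : (Fin n → ℕ) × (Fin n → ℕ)).1).orderEmbOfFin (hcard τ₂.1) l) := fun l =>
      congrArg (fun x => ((x.2 : ↥A) : ℕ)) (congrFun h l)
    have hM : Mset n m g (τ₁.1 : (Fin n → ℕ) × (Fin n → ℕ)).1 = Mset n m g (τ₂.1 : (Fin n → ℕ) × (Fin n → ℕ)).1 := by
      rw [← Finset.coe_inj, ← Finset.range_orderEmbOfFin _ (hcard τ₁.1),
        ← Finset.range_orderEmbOfFin _ (hcard τ₂.1)]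
      exact congrArg Set.range (funext hfst)
    have hω : (τ₁.1 : (Fin n → ℕ) × (Fin n → ℕ)).1 = (τ₂.1 : (Fin n → ℕ) × (Fin n → ℕ)).1 := by
      funext i
      by_cases hi : i ∈ Mset n m g (τ₁.1 : (Fin n → ℕ) × (Fin n → ℕ)).1
      · have : i ∈ Set.range ⇑((Mset n m g (τ₁.1 : (Fin n → ℕ) × (Fin n → ℕ)).1).orderEmbOfFin (hcard τ₁.1)) := by
          rw [Finset.range_orderEmbOfFin]
          exact hi
        obtain ⟨l, hl⟩ := this
        rw [← hl, hsnd l, ← hfst l]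
      · have p₁ : Phi n m g (τ₁.1 : (Fin n → ℕ) × (Fin n → ℕ)).1 (τ₁.1 : (Fin n → ℕ) × (Fin n → ℕ)).2 i = ω' i := congrFun τ₁.2 i
        have p₂ : Phi n m g (τ₂.1 : (Fin n → ℕ) × (Fin n → ℕ)).1 (τ₂.1 : (Fin n → ℕ) × (Fin n → ℕ)).2 i = ω' i := congrFun τ₂.2 i
        rw [Phi, if_neg hi] at p₁
        rw [Phi, if_neg (hM ▸ hi)] at p₂
        rw [p₁, p₂]
    have hv : (τ₁.1 : (Fin n → ℕ) × (Fin n → ℕ)).2 = (τ₂.1 : (Fin n → ℕ) × (Fin n → ℕ)).2 := by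
      funext i
      by_cases hi : i ∈ Mset n m g (τ₁.1 : (Fin n → ℕ) × (Fin n → ℕ)).1
      · have p₁ : Phi n m g (τ₁.1 : (Fin n → ℕ) × (Fin n → ℕ)).1 (τ₁.1 : (Fin n → ℕ) × (Fin n → ℕ)).2 i = ω' i := congrFun τ₁.2 i
        have p₂ : Phi n m g (τ₂.1 : (Fin n → ℕ) × (Fin n → ℕ)).1 (τ₂.1 : (Fin n → ℕ) × (Fin n → ℕ)).2 i = ω' i := congrFun τ₂.2 i
        rw [Phi, if_pos hi] at p₁
        rw [Phi, if_pos (hM ▸ hi)] at p₂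
        rw [p₁, p₂]
      · rw [mem_adm_of_not_mem τ₁.1.2.2 hi, mem_adm_of_not_mem τ₂.1.2.2 (hM ▸ hi)]
    exact Subtype.ext (Subtype.ext (Prod.ext_iff.mpr ⟨hω, hv⟩))
  haveI : Finite Fib := Finite.of_injective Ψ hinj
  haveI : Fintype Fib := Fintype.ofFinite Fib
  rw [tsum_eq_sum (s := (Finset.univ : Finset Fib)) (by simp), Finset.sum_const, nsmul_eq_mul]
  refine mul_le_mul_left ?_ c
  have hle := Fintype.card_le_of_injective Ψ hinj
  have hcardT : Fintype.card (Fin j → (↥D × ↥A)) = (D.card * A.card) ^ j := by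
    rw [Fintype.card_fun, Fintype.card_prod, Fintype.card_coe, Fintype.card_coe,
      Fintype.card_fin]
  have hAg : A.card = g := by rw [hA, Nat.card_Icc]; omega
  have : Fintype.card Fib ≤ (J * g) ^ j := by
    rw [hcardT, hAg] at hle
    exact hle.trans (Nat.pow_le_pow_left (Nat.mul_le_mul_right g hDJ) j)
  calc (Finset.univ.card : ℝ≥0∞) = (Fintype.card Fib : ℝ≥0∞) := by rw [Finset.card_univ]
    _ ≤ (((J * g) ^ j : ℕ) : ℝ≥0∞) := Nat.cast_le.mpr this

lemma step2 (p : PMF ℕ) (hg : 0 < g) (hgf : g < f) (hfm : f < m) :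
    (∑' ω : ↥(Sset n m f J ∩ Tset n m g j),
        ∑ v ∈ adm n m g f (ω : Fin n → ℕ), ∏ i, p (Phi n m g (ω : Fin n → ℕ) v i))
      ≤ (((J * g) ^ j : ℕ) : ℝ≥0∞) * ∑' ω : ↥(Sset n m f J), ∏ i, p ((ω : Fin n → ℕ) i) := by
  classical
  set w : (Fin n → ℕ) → ℝ≥0∞ := fun ω => ∏ i, p (ω i) with hw
  have e1 : (∑' ω : ↥(Sset n m f J ∩ Tset n m g j),
        ∑ v ∈ adm n m g f (ω : Fin n → ℕ), w (Phi n m g (ω : Fin n → ℕ) v))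
      = ∑' τ : ↥(Pset n m g f J j), w (FPhi n m g f J j τ) := by
    simp only [FPhi]
    rw [tsum_subtype (Sset n m f J ∩ Tset n m g j)
      (fun ω => ∑ v ∈ adm n m g f ω, w (Phi n m g ω v)), tsum_subtype (Pset n m g f J j)
      (fun σ => w (Phi n m g σ.1 σ.2)), ENNReal.tsum_prod']
    refine tsum_congr fun ω => ?_
    by_cases hω : ω ∈ Sset n m f J ∩ Tset n m g j
    · rw [Set.indicator_of_mem hω]
      rw [show (∑' v : Fin n → ℕ, (Pset n m g f J j).indicator
          (fun σ => w (Phi n m g σ.1 σ.2)) (ω, v))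
        = ∑ v ∈ adm n m g f ω, (Pset n m g f J j).indicator
          (fun σ => w (Phi n m g σ.1 σ.2)) (ω, v) from
        tsum_eq_sum fun v hv => Set.indicator_of_notMem (fun hmem => hv hmem.2) _]
      refine Finset.sum_congr rfl fun v hv => ?_
      exact (Set.indicator_of_mem (show (ω, v) ∈ Pset n m g f J j from ⟨hω, hv⟩)
        (fun σ => w (Phi n m g σ.1 σ.2))).symm
    · rw [Set.indicator_of_notMem hω]
      rw [show (∑' v : Fin n → ℕ, (Pset n m g f J j).indicator
          (fun σ => w (Phi n m g σ.1 σ.2)) (ω, v)) = 0 from ?_]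
      refine (tsum_eq_sum (s := ∅) fun v _ => ?_).trans (by simp)
      exact Set.indicator_of_notMem (fun hmem => hω hmem.1) _
  rw [e1]
  have e2 : (∑' τ : ↥(Pset n m g f J j), w (FPhi n m g f J j τ))
      = ∑' (ω' : Fin n → ℕ),
          ∑' (_τ : {τ : ↥(Pset n m g f J j) // FPhi n m g f J j τ = ω'}), w ω' := by
    calc (∑' τ : ↥(Pset n m g f J j), w (FPhi n m g f J j τ))
        = ∑' x : (Σ ω' : Fin n → ℕ, {τ : ↥(Pset n m g f J j) // FPhi n m g f J j τ = ω'}),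
            w (FPhi n m g f J j x.2.1) :=
          ((Equiv.sigmaFiberEquiv (FPhi n m g f J j)).tsum_eq
            (fun τ => w (FPhi n m g f J j τ))).symm
      _ = ∑' x : (Σ ω' : Fin n → ℕ, {τ : ↥(Pset n m g f J j) // FPhi n m g f J j τ = ω'}),
            w x.1 := tsum_congr fun x => by rw [x.2.2]
      _ = _ := ENNReal.tsum_sigma' _
  rw [e2]
  calc (∑' (ω' : Fin n → ℕ),
          ∑' (_τ : {τ : ↥(Pset n m g f J j) // FPhi n m g f J j τ = ω'}), w ω')
      ≤ ∑' (ω' : Fin n → ℕ), (((J * g) ^ j : ℕ) : ℝ≥0∞) * (Sset n m f J).indicator w ω' := by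
        refine ENNReal.tsum_le_tsum fun ω' => ?_
        by_cases hne : Nonempty {τ : ↥(Pset n m g f J j) // FPhi n m g f J j τ = ω'}
        · obtain ⟨τ⟩ := hne
          have hω'S : ω' ∈ Sset n m f J := by
            have := Phi_mem_S (n := n) (J := J) hg hgf hfm τ.1.2.1.1 τ.1.2.2
            rwa [show Phi n m g (τ.1 : (Fin n → ℕ) × (Fin n → ℕ)).1
              (τ.1 : (Fin n → ℕ) × (Fin n → ℕ)).2 = ω' from τ.2] at this
          rw [Set.indicator_of_mem hω'S]
          exact fiber_bound hg hgf hfm ω' hω'S (w ω')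
        · haveI := not_nonempty_iff.mp hne
          rw [tsum_empty]
          exact zero_le
    _ = (((J * g) ^ j : ℕ) : ℝ≥0∞) * ∑' (ω' : Fin n → ℕ), (Sset n m f J).indicator w ω' :=
        ENNReal.tsum_mul_left
    _ = (((J * g) ^ j : ℕ) : ℝ≥0∞) * ∑' ω : ↥(Sset n m f J), w ω := by
        rw [tsum_subtype]

lemma key (p : PMF ℕ) (C : NNReal) (hg : 0 < g) (hgf : g < f) (hfm : f < m)
    (hp : ∀ k l : ℕ, m - g < k → k ≤ m → m - f < l → l ≤ m - g → p k ≤ C * p l) :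
    (((f - g) ^ j : ℕ) : ℝ≥0∞)
        * (Measure.pi fun _ : Fin n => p.toMeasure) (Sset n m f J ∩ Tset n m g j)
      ≤ (C : ℝ≥0∞) ^ j * (((J * g) ^ j : ℕ) : ℝ≥0∞)
        * (Measure.pi fun _ : Fin n => p.toMeasure) (Sset n m f J) := by
  classical
  rw [measure_apply, measure_apply]
  have hA : ∀ ω : ↥(Sset n m f J ∩ Tset n m g j),
      (((f - g) ^ j : ℕ) : ℝ≥0∞) * ∏ i, p ((ω : Fin n → ℕ) i)
        ≤ (C : ℝ≥0∞) ^ j * ∑ v ∈ adm n m g f (ω : Fin n → ℕ),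
            ∏ i, p (Phi n m g (ω : Fin n → ℕ) v i) := by
    intro ω
    obtain ⟨⟨⟨hpos, -⟩, -⟩, hT⟩ := ω.2
    have hM : (Mset n m g (ω : Fin n → ℕ)).card = j := card_Mset hg (by omega) hpos hT
    have hcadm : (adm n m g f (ω : Fin n → ℕ)).card = (f - g) ^ j :=
      card_adm hgf (le_of_lt hfm) hM
    calc (((f - g) ^ j : ℕ) : ℝ≥0∞) * ∏ i, p ((ω : Fin n → ℕ) i)
        = ∑ _v ∈ adm n m g f (ω : Fin n → ℕ), ∏ i, p ((ω : Fin n → ℕ) i) := by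
          rw [Finset.sum_const, hcadm, nsmul_eq_mul]
      _ ≤ ∑ v ∈ adm n m g f (ω : Fin n → ℕ),
            (C : ℝ≥0∞) ^ j * ∏ i, p (Phi n m g (ω : Fin n → ℕ) v i) :=
          Finset.sum_le_sum fun v hv => prod_le p C hp hM hv
      _ = (C : ℝ≥0∞) ^ j * ∑ v ∈ adm n m g f (ω : Fin n → ℕ),
            ∏ i, p (Phi n m g (ω : Fin n → ℕ) v i) := (Finset.mul_sum _ _ _).symm
  calc (((f - g) ^ j : ℕ) : ℝ≥0∞) * ∑' ω : ↥(Sset n m f J ∩ Tset n m g j),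
          ∏ i, p ((ω : Fin n → ℕ) i)
      = ∑' ω : ↥(Sset n m f J ∩ Tset n m g j),
          (((f - g) ^ j : ℕ) : ℝ≥0∞) * ∏ i, p ((ω : Fin n → ℕ) i) := ENNReal.tsum_mul_left.symm
    _ ≤ ∑' ω : ↥(Sset n m f J ∩ Tset n m g j),
          (C : ℝ≥0∞) ^ j * ∑ v ∈ adm n m g f (ω : Fin n → ℕ),
            ∏ i, p (Phi n m g (ω : Fin n → ℕ) v i) := ENNReal.tsum_le_tsum hA
    _ = (C : ℝ≥0∞) ^ j * ∑' ω : ↥(Sset n m f J ∩ Tset n m g j),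
          ∑ v ∈ adm n m g f (ω : Fin n → ℕ),
            ∏ i, p (Phi n m g (ω : Fin n → ℕ) v i) := ENNReal.tsum_mul_left
    _ ≤ (C : ℝ≥0∞) ^ j * ((((J * g) ^ j : ℕ) : ℝ≥0∞)
          * ∑' ω : ↥(Sset n m f J), ∏ i, p ((ω : Fin n → ℕ) i)) :=
        mul_le_mul_right (step2 p hg hgf hfm) _
    _ = _ := (mul_assoc _ _ _).symm

end UrnAux

open UrnAux in
/-- Urn model: `n` balls placed independently, each in urn `k` with probability `p k > 0`.
Fix `0 < g < f < m` and `J > 0`.  If `p k ≤ C * p l` for all `k ∈ (m-g, m]` and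
`l ∈ (m-f, m-g]`, then for every `j`,
`P( Σ_{k=m-g+1}^m F_k = j+1 | X_n = m, Σ_{k=m-f+1}^m F_k ≤ J ) ≤ C' (g/f)^j J^j`
for a constant `C'` depending only on `C` and `j`. -/
theorem stmt1 (C : NNReal) (hC : 0 < C) (j : ℕ) :
    ∃ C' : ℝ, 0 < C' ∧
      ∀ (p : PMF ℕ), p 0 = 0 → (∀ k, 1 ≤ k → p k ≠ 0) →
        ∀ (m g f J : ℕ), 0 < g → g < f → f < m → 0 < J →
          (∀ k l : ℕ, m - g < k → k ≤ m → m - f < l → l ≤ m - g → p k ≤ C * p l) →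
          ∀ n : ℕ,
            ProbabilityTheory.cond (Measure.pi fun _ : Fin n => p.toMeasure)
                {ω | (0 < urnCount n ω m ∧ ∀ k, m < k → urnCount n ω k = 0) ∧
                      ∑ k ∈ Finset.Icc (m - f + 1) m, urnCount n ω k ≤ J}
                {ω | ∑ k ∈ Finset.Icc (m - g + 1) m, urnCount n ω k = j + 1}
              ≤ ENNReal.ofReal (C' * ((g : ℝ) / f) ^ j * (J : ℝ) ^ j) := by
  classical
  refine ⟨(2 * (C : ℝ) + 2) ^ j, by positivity, ?_⟩
  intro p hp0 hppos m g f J hg hgf hfm hJ hp n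
  have hSdef : {ω : Fin n → ℕ | (0 < urnCount n ω m ∧ ∀ k, m < k → urnCount n ω k = 0) ∧
      ∑ k ∈ Finset.Icc (m - f + 1) m, urnCount n ω k ≤ J} = Sset n m f J := rfl
  have hTdef : {ω : Fin n → ℕ | ∑ k ∈ Finset.Icc (m - g + 1) m, urnCount n ω k = j + 1}
      = Tset n m g j := rfl
  rw [hSdef, hTdef]
  set μ := Measure.pi fun _ : Fin n => p.toMeasure with hμ
  haveI : IsProbabilityMeasure μ := by rw [hμ]; infer_instance
  have hSm : MeasurableSet (Sset n m f J) := (Set.to_countable _).measurableSet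
  rw [ProbabilityTheory.cond_apply hSm]
  set c := ENNReal.ofReal ((2 * (C : ℝ) + 2) ^ j * ((g : ℝ) / f) ^ j * (J : ℝ) ^ j) with hc
  have hf0 : (0 : ℝ) < f := by exact_mod_cast (show 0 < f by omega)
  have hC0 : (0 : ℝ) ≤ (C : ℝ) := C.coe_nonneg
  have hJ1 : (1 : ℝ) ≤ (J : ℝ) := by exact_mod_cast hJ
  have hg1 : (1 : ℝ) ≤ (g : ℝ) := by exact_mod_cast hg
  rcases eq_or_ne (μ (Sset n m f J)) 0 with h0 | h0
  · rw [measure_mono_null Set.inter_subset_left h0, mul_zero]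
    exact zero_le
  · have hfin : μ (Sset n m f J) ≠ ⊤ := measure_ne_top μ _
    have main : μ (Sset n m f J ∩ Tset n m g j) ≤ c * μ (Sset n m f J) := by
      by_cases hcase : 2 * g ≤ f
      · -- main case: use the key comparison lemma
        have hkey := key (n := n) (J := J) (j := j) p C hg hgf hfm hp
        rw [← hμ] at hkey
        have ha0 : (((f - g) ^ j : ℕ) : ℝ≥0∞) ≠ 0 :=
          Nat.cast_ne_zero.mpr (pow_ne_zero _ (by omega))
        have hat : (((f - g) ^ j : ℕ) : ℝ≥0∞) ≠ ⊤ := ENNReal.natCast_ne_top _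
        have hconst : (C : ℝ≥0∞) ^ j * (((J * g) ^ j : ℕ) : ℝ≥0∞)
            ≤ c * (((f - g) ^ j : ℕ) : ℝ≥0∞) := by
          have hbase : (C : ℝ) * ((J : ℝ) * g) ≤
              (2 * (C : ℝ) + 2) * ((g : ℝ) / f) * J * ((f : ℝ) - g) := by
            have hrw : (2 * (C : ℝ) + 2) * ((g : ℝ) / f) * J * ((f : ℝ) - g)
                = ((2 * (C : ℝ) + 2) * g * J * ((f : ℝ) - g)) / f := by ring
            rw [hrw, le_div_iff₀ hf0]
            have h2g : 2 * (g : ℝ) ≤ f := by exact_mod_cast hcase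
            have h1 : (C : ℝ) * f ≤ (2 * (C : ℝ) + 2) * ((f : ℝ) - g) := by nlinarith
            nlinarith [mul_le_mul_of_nonneg_left h1
              (show (0 : ℝ) ≤ (J : ℝ) * g by positivity)]
          have hreal : (C : ℝ) ^ j * (((J * g) ^ j : ℕ) : ℝ) ≤
              ((2 * (C : ℝ) + 2) ^ j * ((g : ℝ) / f) ^ j * (J : ℝ) ^ j)
                * (((f - g) ^ j : ℕ) : ℝ) := by
            push_cast [Nat.cast_sub (le_of_lt hgf)]
            calc (C : ℝ) ^ j * ((J : ℝ) * (g : ℝ)) ^ j = ((C : ℝ) * ((J : ℝ) * g)) ^ j := by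
                  ring
              _ ≤ ((2 * (C : ℝ) + 2) * ((g : ℝ) / f) * J * ((f : ℝ) - g)) ^ j :=
                  pow_le_pow_left₀ (by positivity) hbase j
              _ = (2 * (C : ℝ) + 2) ^ j * ((g : ℝ) / f) ^ j * (J : ℝ) ^ j
                    * ((f : ℝ) - g) ^ j := by rw [mul_pow, mul_pow, mul_pow]
          calc (C : ℝ≥0∞) ^ j * (((J * g) ^ j : ℕ) : ℝ≥0∞)
              = ENNReal.ofReal ((C : ℝ) ^ j * (((J * g) ^ j : ℕ) : ℝ)) := by
                rw [ENNReal.ofReal_mul (by positivity), ENNReal.ofReal_pow (by positivity),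
                  ENNReal.ofReal_coe_nnreal, ENNReal.ofReal_natCast]
            _ ≤ ENNReal.ofReal (((2 * (C : ℝ) + 2) ^ j * ((g : ℝ) / f) ^ j * (J : ℝ) ^ j)
                  * (((f - g) ^ j : ℕ) : ℝ)) := ENNReal.ofReal_le_ofReal hreal
            _ = c * (((f - g) ^ j : ℕ) : ℝ≥0∞) := by
                rw [ENNReal.ofReal_mul (by positivity), ENNReal.ofReal_natCast, hc]
        calc μ (Sset n m f J ∩ Tset n m g j)
            = ((((f - g) ^ j : ℕ) : ℝ≥0∞))⁻¹ * ((((f - g) ^ j : ℕ) : ℝ≥0∞)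
                * μ (Sset n m f J ∩ Tset n m g j)) := by
              rw [← mul_assoc, ENNReal.inv_mul_cancel ha0 hat, one_mul]
          _ ≤ ((((f - g) ^ j : ℕ) : ℝ≥0∞))⁻¹ * ((C : ℝ≥0∞) ^ j * (((J * g) ^ j : ℕ) : ℝ≥0∞)
                * μ (Sset n m f J)) := mul_le_mul_right hkey _
          _ ≤ ((((f - g) ^ j : ℕ) : ℝ≥0∞))⁻¹ * (c * (((f - g) ^ j : ℕ) : ℝ≥0∞)
                * μ (Sset n m f J)) :=
              mul_le_mul_right (mul_le_mul_left hconst _) _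
          _ = c * μ (Sset n m f J) := by
              rw [show c * (((f - g) ^ j : ℕ) : ℝ≥0∞) * μ (Sset n m f J)
                  = (((f - g) ^ j : ℕ) : ℝ≥0∞) * (c * μ (Sset n m f J)) by ring,
                ← mul_assoc, ENNReal.inv_mul_cancel ha0 hat, one_mul]
      · -- trivial case: g > f / 2
        have h1c : (1 : ℝ≥0∞) ≤ c := by
          rw [hc, show (2 * (C : ℝ) + 2) ^ j * ((g : ℝ) / f) ^ j * (J : ℝ) ^ j
            = ((2 * (C : ℝ) + 2) * ((g : ℝ) / f) * J) ^ j by rw [mul_pow, mul_pow]]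
          refine ENNReal.one_le_ofReal.mpr (one_le_pow₀ ?_)
          have h2 : (1 : ℝ) / 2 ≤ (g : ℝ) / f := by
            rw [div_le_div_iff₀ (by norm_num) hf0]
            have : (f : ℝ) ≤ 2 * g := by exact_mod_cast (le_of_lt (not_le.mp hcase))
            linarith
          have hq0 : (0 : ℝ) ≤ (g : ℝ) / f := by positivity
          have h3 : (1 : ℝ) ≤ (2 * (C : ℝ) + 2) * ((g : ℝ) / f) := by nlinarith
          calc (1 : ℝ) = 1 * 1 := by norm_num
            _ ≤ ((2 * (C : ℝ) + 2) * ((g : ℝ) / f)) * J :=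
                mul_le_mul h3 hJ1 zero_le_one (le_trans zero_le_one h3)
        calc μ (Sset n m f J ∩ Tset n m g j) ≤ μ (Sset n m f J) :=
              measure_mono Set.inter_subset_left
          _ = 1 * μ (Sset n m f J) := (one_mul _).symm
          _ ≤ c * μ (Sset n m f J) := mul_le_mul_left h1c _
    calc (μ (Sset n m f J))⁻¹ * μ (Sset n m f J ∩ Tset n m g j)
        ≤ (μ (Sset n m f J))⁻¹ * (c * μ (Sset n m f J)) := mul_le_mul_right main _
      _ = c * ((μ (Sset n m f J))⁻¹ * μ (Sset n m f J)) := by ring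
      _ = c := by rw [ENNReal.inv_mul_cancel h0 hfin, mul_one]
end

section
/- Conditionally on X_n ≤ m+1 and F_m + F_{m+1} = h, the random variable F_m follows a binomial distribution with parameters h and p_m/(p_m + p_{m+1}). -/
open MeasureTheory ProbabilityTheory
open scoped ENNReal NNReal

lemma measAll {n : ℕ} (A : Set (Fin n → ℕ)) : MeasurableSet A := by
  have h1 : ∀ ω : Fin n → ℕ, MeasurableSet ({ω} : Set (Fin n → ℕ)) := by
    intro ω
    have : ({ω} : Set (Fin n → ℕ)) = ⋂ i, (fun f : Fin n → ℕ => f i) ⁻¹' {ω i} := by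
      ext f; simp [funext_iff]
    rw [this]
    exact MeasurableSet.iInter fun i => measurable_pi_apply i (measurableSet_singleton _)
  have : A = ⋃ ω ∈ A, {ω} := by simp
  rw [this]
  exact MeasurableSet.biUnion A.to_countable fun ω _ => h1 ω

lemma tsum_pi_prod : ∀ {n : ℕ} (f : Fin n → ℕ → ℝ≥0∞),
    ∑' ω : Fin n → ℕ, ∏ i, f i (ω i) = ∏ i, ∑' k, f i k := by
  intro n
  induction n with
  | zero =>
    intro f
    simp [tsum_eq_single (fun (i : Fin 0) => 0) (fun b hb => absurd (Subsingleton.elim b _) hb)]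
  | succ n ih =>
    intro f
    rw [← (Fin.consEquiv fun _ : Fin (n+1) => ℕ).tsum_eq]
    have : ∀ x : ℕ × (Fin n → ℕ),
        (∏ i, f i ((Fin.consEquiv fun _ : Fin (n+1) => ℕ) x i)) = f 0 x.1 * ∏ i : Fin n, f i.succ (x.2 i) := by
      intro x
      rw [Fin.prod_univ_succ]
      simp [Fin.consEquiv]
    simp_rw [this]
    rw [ENNReal.tsum_prod (f := fun (a : ℕ) (b : Fin n → ℕ) => f 0 a * ∏ i : Fin n, f i.succ (b i))]
    simp_rw [ENNReal.tsum_mul_left, ENNReal.tsum_mul_right]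
    rw [ih fun i => f i.succ, Fin.prod_univ_succ]



lemma pi_apply (p : PMF ℕ) {n : ℕ} (A : Set (Fin n → ℕ)) :
    Measure.pi (fun _ : Fin n => p.toMeasure) A
      = ∑' ω : Fin n → ℕ, A.indicator (fun ω => ∏ i, p (ω i)) ω := by
  classical
  set ν : Measure (Fin n → ℕ) :=
    Measure.sum (fun ω : Fin n → ℕ => (∏ i, p (ω i)) • Measure.dirac ω) with hν
  have hνA : ∀ B : Set (Fin n → ℕ),
      ν B = ∑' ω : Fin n → ℕ, B.indicator (fun ω => ∏ i, p (ω i)) ω := by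
    intro B
    rw [hν, Measure.sum_apply _ (measAll B)]
    refine tsum_congr fun ω => ?_
    rw [Measure.smul_apply, Measure.dirac_apply' _ (measAll B), smul_eq_mul]
    by_cases hω : ω ∈ B <;> simp [Set.indicator_apply, hω]
  have hpi : Measure.pi (fun _ : Fin n => p.toMeasure) = ν := by
    refine Measure.pi_eq fun s hs => ?_
    rw [hνA]
    have h1 : ∀ ω : Fin n → ℕ,
        (Set.pi Set.univ s).indicator (fun ω => ∏ i, p (ω i)) ω
          = ∏ i, (s i).indicator p (ω i) := by
      intro ω
      by_cases hω : ω ∈ Set.pi Set.univ s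
      · rw [Set.indicator_of_mem hω]
        refine Finset.prod_congr rfl fun i _ => ?_
        rw [Set.indicator_of_mem (hω i (Set.mem_univ i))]
      · rw [Set.indicator_of_notMem hω]
        rw [Set.mem_pi] at hω
        push_neg at hω
        obtain ⟨i, _, hi⟩ := hω
        exact (Finset.prod_eq_zero (Finset.mem_univ i)
          (by rw [Set.indicator_of_notMem hi])).symm
    simp_rw [h1]
    rw [tsum_pi_prod]
    refine Finset.prod_congr rfl fun i _ => ?_
    rw [PMF.toMeasure_apply p (hs i)]
  rw [hpi, hνA]


noncomputable def Rfun (A B S : ℝ≥0∞) (n t u : ℕ) : ℝ≥0∞ :=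
  if t + u ≤ n then
    (n.choose t : ℝ≥0∞) * ((n - t).choose u : ℝ≥0∞) * A^t * B^u * S^(n - t - u)
  else 0

lemma Rrec00 (A B S : ℝ≥0∞) (n : ℕ) :
    Rfun A B S (n+1) 0 0 = S * Rfun A B S n 0 0 := by
  simp [Rfun, pow_succ, mul_comm]

lemma Rrec0u (A B S : ℝ≥0∞) (n u' : ℕ) :
    Rfun A B S (n+1) 0 (u'+1)
      = S * Rfun A B S n 0 (u'+1) + B * Rfun A B S n 0 u' := by
  simp only [Rfun, Nat.sub_zero, Nat.choose_zero_right, Nat.cast_one, one_mul, pow_zero,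
    Nat.zero_add]
  rcases Nat.lt_or_ge n u' with hn | hn
  · rw [if_neg (by omega), if_neg (by omega), if_neg (by omega)]; simp
  rcases Nat.eq_or_lt_of_le hn with he | hlt
  · subst he
    rw [if_pos (by omega), if_neg (by omega), if_pos (by omega)]
    simp [Nat.sub_self, Nat.choose_self, pow_succ]
    ring
  · rw [if_pos (by omega), if_pos (by omega), if_pos (by omega)]
    have e1 : n + 1 - (u' + 1) = (n - (u' + 1)) + 1 := by omega
    have e2 : n - u' = (n - (u' + 1)) + 1 := by omega
    rw [e1, e2, Nat.choose_succ_succ n u']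
    simp only [Nat.succ_eq_add_one]
    push_cast
    ring
  
lemma Rrect0 (A B S : ℝ≥0∞) (n t' : ℕ) :
    Rfun A B S (n+1) (t'+1) 0
      = S * Rfun A B S n (t'+1) 0 + A * Rfun A B S n t' 0 := by
  simp only [Rfun, Nat.sub_zero, Nat.choose_zero_right, Nat.cast_one, mul_one, pow_zero,
    Nat.add_zero]
  rcases Nat.lt_or_ge n t' with hn | hn
  · rw [if_neg (by omega), if_neg (by omega), if_neg (by omega)]; simp
  rcases Nat.eq_or_lt_of_le hn with he | hlt
  · subst he
    rw [if_pos (by omega), if_neg (by omega), if_pos (by omega)]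
    simp [Nat.sub_self, Nat.choose_self, pow_succ]
    ring
  · rw [if_pos (by omega), if_pos (by omega), if_pos (by omega)]
    have e1 : n + 1 - (t' + 1) = (n - (t' + 1)) + 1 := by omega
    have e2 : n - t' = (n - (t' + 1)) + 1 := by omega
    rw [e1, e2, Nat.choose_succ_succ n t']
    simp only [Nat.succ_eq_add_one]
    push_cast
    ring

lemma Rrectu (A B S : ℝ≥0∞) (n t' u' : ℕ) :
    Rfun A B S (n+1) (t'+1) (u'+1)
      = S * Rfun A B S n (t'+1) (u'+1) + A * Rfun A B S n t' (u'+1)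
        + B * Rfun A B S n (t'+1) u' := by
  simp only [Rfun]
  rcases Nat.lt_or_ge (n + 1) (t' + 1 + (u' + 1)) with hn | hn
  · rw [if_neg (by omega), if_neg (by omega), if_neg (by omega), if_neg (by omega)]; simp
  have ht : t' + 1 ≤ n := by omega
  rcases Nat.eq_or_lt_of_le hn with he | hlt
  · rw [if_pos (by omega), if_neg (by omega), if_pos (by omega), if_pos (by omega)]
    have e1 : n + 1 - (t' + 1) - (u' + 1) = 0 := by omega
    have e2 : n - t' - (u' + 1) = 0 := by omega
    have e3 : n - (t' + 1) - u' = 0 := by omega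
    have e4 : (n + 1 : ℕ) - (t' + 1) = (n - (t' + 1)) + 1 := by omega
    have e5 : (n : ℕ) - t' = (n - (t' + 1)) + 1 := by omega
    rw [e1, e2, e3, e4, e5]
    rw [Nat.choose_succ_succ n t', Nat.choose_succ_succ (n - (t' + 1)) u']
    have hz : (n - (t' + 1)).choose (u' + 1) = 0 := Nat.choose_eq_zero_of_lt (by omega)
    rw [hz]
    simp only [Nat.succ_eq_add_one]
    push_cast
    ring
  · rw [if_pos (by omega), if_pos (by omega), if_pos (by omega), if_pos (by omega)]
    have e1 : n + 1 - (t' + 1) - (u' + 1) = (n - (t' + 1) - (u' + 1)) + 1 := by omega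
    have e2 : n - t' - (u' + 1) = (n - (t' + 1) - (u' + 1)) + 1 := by omega
    have e3 : n - (t' + 1) - u' = (n - (t' + 1) - (u' + 1)) + 1 := by omega
    have e4 : (n + 1 : ℕ) - (t' + 1) = (n - (t' + 1)) + 1 := by omega
    have e5 : (n : ℕ) - t' = (n - (t' + 1)) + 1 := by omega
    rw [e1, e2, e3, e4, e5]
    rw [Nat.choose_succ_succ n t', Nat.choose_succ_succ (n - (t' + 1)) u']
    simp only [Nat.succ_eq_add_one]
    push_cast
    ring





lemma urnCount_eq_card {n : ℕ} (ω : Fin n → ℕ) (k : ℕ) :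
    urnCount n ω k = (Finset.univ.filter fun i => ω i = k).card := by
  rw [urnCount, ← Set.ncard_coe_finset]
  congr 1
  ext i; simp

lemma urnCount_cons {n : ℕ} (a : ℕ) (ω : Fin n → ℕ) (k : ℕ) :
    urnCount (n+1) (Fin.cons a ω) k = (if a = k then 1 else 0) + urnCount n ω k := by
  classical
  rw [urnCount_eq_card, urnCount_eq_card, Finset.card_filter, Finset.card_filter,
    Fin.sum_univ_succ]
  simp [Fin.cons_zero, Fin.cons_succ]

lemma key (q : ℕ → ℝ≥0∞) (M : ℕ) : ∀ n t u : ℕ,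
    (∑' ω : Fin n → ℕ,
      if (∀ i, ω i < M + 2) ∧ urnCount n ω M = t ∧ urnCount n ω (M+1) = u
      then ∏ i, q (ω i) else 0)
    = Rfun (q M) (q (M+1)) (∑ k ∈ Finset.range M, q k) n t u := by
  intro n
  induction n with
  | zero =>
    intro t u
    have h0 : ∀ ω : Fin 0 → ℕ, ∀ k, urnCount 0 ω k = 0 := by
      intro ω k; rw [urnCount_eq_card]; simp
    rw [tsum_eq_single (fun i => i.elim0)
      (fun b hb => absurd (Subsingleton.elim b _) hb)]
    rcases t with _ | t'
    · rcases u with _ | u'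
      · rw [if_pos ⟨fun i => i.elim0, h0 _ _, h0 _ _⟩]
        simp [Rfun]
      · rw [if_neg (by simp [h0])]
        simp [Rfun]
    · rw [if_neg (by simp [h0])]
      simp [Rfun]
  | succ n ih =>
    intro t u
    set A := q M with hA
    set B := q (M+1) with hB
    set S := ∑ k ∈ Finset.range M, q k with hS
    -- reindex by cons
    rw [← (Fin.consEquiv fun _ : Fin (n+1) => ℕ).tsum_eq]
    have hcons : ∀ x : ℕ × (Fin n → ℕ),
        (if (∀ i, (Fin.consEquiv fun _ : Fin (n+1) => ℕ) x i < M + 2)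
            ∧ urnCount (n+1) ((Fin.consEquiv fun _ : Fin (n+1) => ℕ) x) M = t
            ∧ urnCount (n+1) ((Fin.consEquiv fun _ : Fin (n+1) => ℕ) x) (M+1) = u
          then ∏ i, q ((Fin.consEquiv fun _ : Fin (n+1) => ℕ) x i) else 0)
        = (fun (a : ℕ) (ω : Fin n → ℕ) =>
            if (a < M + 2 ∧ ∀ i, ω i < M + 2)
                ∧ ((if a = M then 1 else 0) + urnCount n ω M = t)
                ∧ ((if a = M+1 then 1 else 0) + urnCount n ω (M+1) = u)
            then q a * ∏ i, q (ω i) else 0) x.1 x.2 := by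
      intro x
      have he : (Fin.consEquiv fun _ : Fin (n+1) => ℕ) x = Fin.cons x.1 x.2 := rfl
      rw [he]
      have h1 : (∀ i, (Fin.cons x.1 x.2 : Fin (n+1) → ℕ) i < M + 2) ↔ (x.1 < M + 2 ∧ ∀ i, x.2 i < M + 2) := by
        rw [Fin.forall_fin_succ]
        simp [Fin.cons_zero, Fin.cons_succ]
      have h2 : ∏ i, q ((Fin.cons x.1 x.2 : Fin (n+1) → ℕ) i) = q x.1 * ∏ i, q (x.2 i) := by
        rw [Fin.prod_univ_succ]
        simp [Fin.cons_zero, Fin.cons_succ]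
      rw [urnCount_cons, urnCount_cons, h2]
      congr 1
      rw [h1]
    simp_rw [hcons]
    rw [ENNReal.tsum_prod (f := fun (a : ℕ) (ω : Fin n → ℕ) =>
            if (a < M + 2 ∧ ∀ i, ω i < M + 2)
                ∧ ((if a = M then 1 else 0) + urnCount n ω M = t)
                ∧ ((if a = M+1 then 1 else 0) + urnCount n ω (M+1) = u)
            then q a * ∏ i, q (ω i) else 0)]
    -- outer sum has support in range (M+2)
    rw [tsum_eq_sum (s := Finset.range (M+2))
      (by
        intro a ha
        rw [Finset.mem_range] at ha
        have : ¬ a < M + 2 := by omega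
        simp only [this, false_and, if_false]
        exact tsum_zero)]
    rw [Finset.sum_range_succ, Finset.sum_range_succ]
    -- the three pieces
    have hlow : ∀ a ∈ Finset.range M,
        (∑' ω : Fin n → ℕ,
          if (a < M + 2 ∧ ∀ i, ω i < M + 2)
              ∧ ((if a = M then 1 else 0) + urnCount n ω M = t)
              ∧ ((if a = M+1 then 1 else 0) + urnCount n ω (M+1) = u)
          then q a * ∏ i, q (ω i) else 0)
        = q a * Rfun A B S n t u := by
      intro a ha
      rw [Finset.mem_range] at ha
      have h1 : a < M + 2 := by omega
      have h2 : a ≠ M := by omega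
      have h3 : a ≠ M + 1 := by omega
      rw [← ih t u, ← ENNReal.tsum_mul_left]
      refine tsum_congr fun ω => ?_
      simp only [h1, h2, h3, if_false, true_and, zero_add, mul_ite, mul_zero]
    rw [Finset.sum_congr rfl hlow, ← Finset.sum_mul]
    -- a = M piece
    have hM : (∑' ω : Fin n → ℕ,
          if (M < M + 2 ∧ ∀ i, ω i < M + 2)
              ∧ ((if M = M then 1 else 0) + urnCount n ω M = t)
              ∧ ((if M = M+1 then 1 else 0) + urnCount n ω (M+1) = u)
          then q M * ∏ i, q (ω i) else 0)
        = (if t = 0 then 0 else A * Rfun A B S n (t-1) u) := by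
      have h1 : M < M + 2 := by omega
      have h2 : (M = M) = True := by simp
      have h3 : (M = M + 1) = False := by simp
      rcases t with _ | t'
      · refine Eq.trans ?_ (if_pos rfl).symm
        rw [ENNReal.tsum_eq_zero]
        intro ω
        have : ¬ ((if M = M then 1 else 0) + urnCount n ω M = 0) := by
          rw [if_pos rfl]; omega
        have hneg : ¬ ((M < M + 2 ∧ ∀ i, ω i < M + 2)
            ∧ ((if M = M then 1 else 0) + urnCount n ω M = 0)
            ∧ ((if M = M+1 then 1 else 0) + urnCount n ω (M+1) = u)) := by
          rintro ⟨-, h2, -⟩; exact this h2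
        exact if_neg hneg
      · rw [if_neg (Nat.succ_ne_zero t'), show t' + 1 - 1 = t' from rfl,
          ← ih t' u, ← ENNReal.tsum_mul_left]
        refine tsum_congr fun ω => ?_
        have h4 : (1 + urnCount n ω M = t' + 1) ↔ urnCount n ω M = t' := by omega
        simp only [h1, h2, h3, true_and, if_true, if_false, h4, zero_add,
          mul_ite, mul_zero, hA, hB]
    -- a = M+1 piece
    have hM1 : (∑' ω : Fin n → ℕ,
          if (M + 1 < M + 2 ∧ ∀ i, ω i < M + 2)
              ∧ ((if M + 1 = M then 1 else 0) + urnCount n ω M = t)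
              ∧ ((if M + 1 = M+1 then 1 else 0) + urnCount n ω (M+1) = u)
          then q (M+1) * ∏ i, q (ω i) else 0)
        = (if u = 0 then 0 else B * Rfun A B S n t (u-1)) := by
      have h1 : M + 1 < M + 2 := by omega
      have h2 : (M + 1 = M) = False := by simp
      have h3 : (M + 1 = M + 1) = True := by simp
      rcases u with _ | u'
      · refine Eq.trans ?_ (if_pos rfl).symm
        rw [ENNReal.tsum_eq_zero]
        intro ω
        have : ¬ ((if M + 1 = M + 1 then 1 else 0) + urnCount n ω (M+1) = 0) := by
          rw [if_pos rfl]; omega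
        have hneg : ¬ ((M + 1 < M + 2 ∧ ∀ i, ω i < M + 2)
            ∧ ((if M + 1 = M then 1 else 0) + urnCount n ω M = t)
            ∧ ((if M + 1 = M+1 then 1 else 0) + urnCount n ω (M+1) = 0)) := by
          rintro ⟨-, -, h2⟩; exact this h2
        exact if_neg hneg
      · rw [if_neg (Nat.succ_ne_zero u'), show u' + 1 - 1 = u' from rfl,
          ← ih t u', ← ENNReal.tsum_mul_left]
        refine tsum_congr fun ω => ?_
        have h4 : (1 + urnCount n ω (M+1) = u' + 1) ↔ urnCount n ω (M+1) = u' := by omega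
        simp only [h1, h2, h3, true_and, if_true, if_false, h4, zero_add,
          mul_ite, mul_zero, hA, hB]
    rw [hM, hM1]
    rcases t with _ | t' <;> rcases u with _ | u'
    · rw [Rrec00]; simp [mul_comm, hS]
    · rw [Rrec0u, if_pos (rfl : (0:ℕ) = 0), if_neg (Nat.succ_ne_zero u'), Nat.add_sub_cancel]
      try ring
    · rw [Rrect0, if_pos (rfl : (0:ℕ) = 0), if_neg (Nat.succ_ne_zero t'), Nat.add_sub_cancel]
      try ring
    · rw [Rrectu, if_neg (Nat.succ_ne_zero t'), if_neg (Nat.succ_ne_zero u'),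
        Nat.add_sub_cancel, Nat.add_sub_cancel]
      try ring


/-- Urn model: `n` balls placed independently, each in urn `k` with probability `p k > 0`.
Conditionally on `X_n ≤ m+1` and `F_m + F_{m+1} = h`, the count `F_m` is binomial with
parameters `h` and `p m / (p m + p (m+1))`. -/
theorem stmt2 (p : PMF ℕ) (hp0 : p 0 = 0) (hp : ∀ k, 1 ≤ k → p k ≠ 0)
    (n m h : ℕ) (hm : 1 ≤ m)
    (hB : (Measure.pi fun _ : Fin n => p.toMeasure)
        {ω | (∀ k, m + 1 < k → urnCount n ω k = 0) ∧
              urnCount n ω m + urnCount n ω (m + 1) = h} ≠ 0) :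
    ∀ t : ℕ,
      ProbabilityTheory.cond (Measure.pi fun _ : Fin n => p.toMeasure)
          {ω | (∀ k, m + 1 < k → urnCount n ω k = 0) ∧
                urnCount n ω m + urnCount n ω (m + 1) = h}
          {ω | urnCount n ω m = t}
        = (h.choose t : ℝ≥0∞) * (p m / (p m + p (m + 1))) ^ t
            * (1 - p m / (p m + p (m + 1))) ^ (h - t) := by
  classical
  intro t
  set μ := Measure.pi fun _ : Fin n => p.toMeasure with hμ
  set Bset := {ω : Fin n → ℕ | (∀ k, m + 1 < k → urnCount n ω k = 0) ∧
      urnCount n ω m + urnCount n ω (m + 1) = h} with hBset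
  set a := (p m : ℝ≥0∞) with ha
  set b := (p (m+1) : ℝ≥0∞) with hb
  set c := a + b with hc
  set s := ∑ k ∈ Finset.range m, (p k : ℝ≥0∞) with hs
  have ha0 : a ≠ 0 := hp m hm
  have hb0 : b ≠ 0 := hp (m+1) (by omega)
  have hatop : a ≠ ∞ := PMF.apply_ne_top p m
  have hbtop : b ≠ ∞ := PMF.apply_ne_top p (m+1)
  have hc0 : c ≠ 0 := by
    rw [hc]; intro hcc; exact ha0 (add_eq_zero.mp hcc).1
  have hctop : c ≠ ∞ := by rw [hc]; exact ENNReal.add_ne_top.mpr ⟨hatop, hbtop⟩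
  have hs1 : s ≤ 1 := by
    rw [hs]
    calc ∑ k ∈ Finset.range m, (p k : ℝ≥0∞) ≤ ∑' k, (p k : ℝ≥0∞) := ENNReal.sum_le_tsum _
    _ = 1 := p.tsum_coe
  have hstop : s ≠ ∞ := ne_top_of_le_ne_top ENNReal.one_ne_top hs1
  -- event equivalence
  have hiff : ∀ ω : Fin n → ℕ, (∀ k, m + 1 < k → urnCount n ω k = 0) ↔ (∀ i, ω i < m + 2) := by
    intro ω
    constructor
    · intro hk i
      by_contra hlt
      push_neg at hlt
      have h1 := hk (ω i) (by omega)
      rw [urnCount_eq_card] at h1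
      have h2 := Finset.card_eq_zero.mp h1
      have h3 : i ∈ Finset.univ.filter fun j => ω j = ω i :=
        Finset.mem_filter.mpr ⟨Finset.mem_univ i, rfl⟩
      rw [h2] at h3
      exact absurd h3 (Finset.notMem_empty i)
    · intro hbnd k hk
      rw [urnCount_eq_card, Finset.card_eq_zero, Finset.filter_eq_empty_iff]
      intro i _
      have := hbnd i
      omega
  have hkey := key (fun k => (p k : ℝ≥0∞)) m n
  -- measure of the intersection events
  have hmeasBt : ∀ t' : ℕ, μ (Bset ∩ {ω | urnCount n ω m = t'})
      = if t' ≤ h then Rfun a b s n t' (h - t') else 0 := by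
    intro t'
    rw [hμ, pi_apply]
    by_cases hth : t' ≤ h
    · rw [if_pos hth, ← hkey t' (h - t')]
      refine tsum_congr fun ω => ?_
      rw [Set.indicator_apply]
      have hmem : (ω ∈ Bset ∩ {ω | urnCount n ω m = t'})
          ↔ ((∀ i, ω i < m + 2) ∧ urnCount n ω m = t' ∧ urnCount n ω (m+1) = h - t') := by
        simp only [hBset, Set.mem_inter_iff, Set.mem_setOf_eq]
        constructor
        · rintro ⟨⟨h1, h2⟩, h3⟩
          exact ⟨(hiff ω).1 h1, h3, by omega⟩
        · rintro ⟨h1, h2, h3⟩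
          exact ⟨⟨(hiff ω).2 h1, by omega⟩, h2⟩
      rw [if_congr hmem rfl rfl]
    · rw [if_neg hth]
      have hempty : Bset ∩ {ω : Fin n → ℕ | urnCount n ω m = t'} = ∅ := by
        ext ω
        simp only [hBset, Set.mem_inter_iff, Set.mem_setOf_eq, Set.mem_empty_iff_false,
          iff_false]
        rintro ⟨⟨-, h2⟩, h3⟩
        omega
      rw [hempty]
      simp
  have hBne : μ Bset ≠ 0 := hB
  -- measure of Bset
  have hmeasB : μ Bset = ∑ t' ∈ Finset.range (h+1), Rfun a b s n t' (h - t') := by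
    rw [hμ, pi_apply]
    have hpt : ∀ ω : Fin n → ℕ, Bset.indicator (fun ω => ∏ i, (p (ω i) : ℝ≥0∞)) ω
        = ∑ t' ∈ Finset.range (h+1),
          (if (∀ i, ω i < m + 2) ∧ urnCount n ω m = t' ∧ urnCount n ω (m+1) = h - t'
           then ∏ i, (p (ω i) : ℝ≥0∞) else 0) := by
      intro ω
      by_cases hω : ω ∈ Bset
      · rw [Set.indicator_of_mem hω]
        obtain ⟨h1, h2⟩ := hω
        rw [Finset.sum_eq_single (urnCount n ω m)]
        · rw [if_pos ⟨(hiff ω).1 h1, rfl, by omega⟩]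
        · intro b' _ hne
          rw [if_neg]
          rintro ⟨-, hbb, -⟩
          exact hne (by omega)
        · intro hnotin
          exfalso
          exact hnotin (Finset.mem_range.mpr (by omega))
      · rw [Set.indicator_of_notMem hω]
        symm
        apply Finset.sum_eq_zero
        intro t' ht'
        rw [Finset.mem_range] at ht'
        rw [if_neg]
        rintro ⟨h1, h2, h3⟩
        exact hω ⟨(hiff ω).2 h1, by omega⟩
    rw [tsum_congr hpt, Summable.tsum_finsetSum (fun i _ => ENNReal.summable)]
    exact Finset.sum_congr rfl fun t' _ => hkey t' (h - t')
  -- h ≤ n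
  have hhn : h ≤ n := by
    by_contra hhn
    apply hBne
    rw [hmeasB]
    apply Finset.sum_eq_zero
    intro t' ht'
    rw [Finset.mem_range] at ht'
    rw [Rfun, if_neg (by omega)]
  -- closed form for μ Bset
  have hsum : μ Bset = (n.choose h : ℝ≥0∞) * c ^ h * s ^ (n - h) := by
    rw [hmeasB]
    have hterm : ∀ t' ∈ Finset.range (h+1), Rfun a b s n t' (h-t')
        = (n.choose h : ℝ≥0∞) * s^(n-h) * (a^t' * b^(h-t') * (h.choose t' : ℝ≥0∞)) := by
      intro t' ht'
      rw [Finset.mem_range] at ht'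
      rw [Rfun, if_pos (by omega)]
      have e1 : n - t' - (h - t') = n - h := by omega
      rw [e1]
      have e2 := Nat.choose_mul (n := n) (k := h) (s := t') (by omega)
      have e3 : ((n.choose t' : ℝ≥0∞) * ((n - t').choose (h - t') : ℝ≥0∞))
          = (n.choose h : ℝ≥0∞) * (h.choose t' : ℝ≥0∞) := by
        rw [← Nat.cast_mul, ← Nat.cast_mul, ← e2]
      calc (n.choose t' : ℝ≥0∞) * ((n - t').choose (h - t') : ℝ≥0∞) * a^t' * b^(h-t') * s^(n-h)
          = ((n.choose t' : ℝ≥0∞) * ((n - t').choose (h - t') : ℝ≥0∞))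
            * (a^t' * b^(h-t') * s^(n-h)) := by ring
        _ = ((n.choose h : ℝ≥0∞) * (h.choose t' : ℝ≥0∞)) * (a^t' * b^(h-t') * s^(n-h)) := by
            rw [e3]
        _ = (n.choose h : ℝ≥0∞) * s^(n-h) * (a^t' * b^(h-t') * (h.choose t' : ℝ≥0∞)) := by ring
    rw [Finset.sum_congr rfl hterm, ← Finset.mul_sum, ← add_pow]
    rw [← hc]
    ring
  -- the conditional probability
  rw [ProbabilityTheory.cond_apply (measAll Bset) μ, hmeasBt t, hsum]
  by_cases hth : t ≤ h
  · rw [if_pos hth, Rfun, if_pos (by omega)]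
    have e1 : n - t - (h - t) = n - h := by omega
    rw [e1]
    have e2 := Nat.choose_mul (n := n) (k := h) (s := t) hth
    have e3 : ((n.choose t : ℝ≥0∞) * ((n - t).choose (h - t) : ℝ≥0∞))
        = (n.choose h : ℝ≥0∞) * (h.choose t : ℝ≥0∞) := by
      rw [← Nat.cast_mul, ← Nat.cast_mul, ← e2]
    -- 1 - a/c = b/c
    have hq1 : (1 : ℝ≥0∞) - a / c = b / c := by
      have hsum1 : a / c + b / c = 1 := by
        rw [ENNReal.div_add_div_same, ← hc, ENNReal.div_self hc0 hctop]
      rw [← hsum1, ENNReal.add_sub_cancel_left]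
      exact (ENNReal.div_lt_top hatop hc0).ne
    rw [hq1]
    have hcanc1 : (a/c)^t * c^t = a^t := by
      rw [div_eq_mul_inv, mul_pow, ← ENNReal.inv_pow, mul_assoc,
        ENNReal.inv_mul_cancel (pow_ne_zero t hc0) (ENNReal.pow_ne_top hctop), mul_one]
    have hcanc2 : (b/c)^(h-t) * c^(h-t) = b^(h-t) := by
      rw [div_eq_mul_inv, mul_pow, ← ENNReal.inv_pow, mul_assoc,
        ENNReal.inv_mul_cancel (pow_ne_zero _ hc0) (ENNReal.pow_ne_top hctop), mul_one]
    have hD0 : ((n.choose h : ℝ≥0∞) * c ^ h * s ^ (n - h)) ≠ 0 := by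
      rw [← hsum]; exact hBne
    have hDtop : ((n.choose h : ℝ≥0∞) * c ^ h * s ^ (n - h)) ≠ ∞ := by
      exact ENNReal.mul_ne_top (ENNReal.mul_ne_top (ENNReal.natCast_ne_top _)
        (ENNReal.pow_ne_top hctop)) (ENNReal.pow_ne_top hstop)
    have hnum : (n.choose t : ℝ≥0∞) * ((n - t).choose (h - t) : ℝ≥0∞)
          * a^t * b^(h-t) * s^(n-h)
        = ((h.choose t : ℝ≥0∞) * (a/c)^t * (b/c)^(h-t))
          * ((n.choose h : ℝ≥0∞) * c ^ h * s ^ (n - h)) := by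
      have hch : c ^ h = c ^ t * c ^ (h - t) := by
        rw [← pow_add]
        congr 1
        omega
      calc (n.choose t : ℝ≥0∞) * ((n - t).choose (h - t) : ℝ≥0∞) * a^t * b^(h-t) * s^(n-h)
          = ((n.choose t : ℝ≥0∞) * ((n - t).choose (h - t) : ℝ≥0∞))
            * (a^t * b^(h-t) * s^(n-h)) := by ring
        _ = ((n.choose h : ℝ≥0∞) * (h.choose t : ℝ≥0∞)) * (a^t * b^(h-t) * s^(n-h)) := by
            rw [e3]
        _ = ((h.choose t : ℝ≥0∞) * (a/c)^t * (b/c)^(h-t))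
            * ((n.choose h : ℝ≥0∞) * (c ^ t * c ^ (h - t)) * s ^ (n - h)) := by
            rw [show ((h.choose t : ℝ≥0∞) * (a/c)^t * (b/c)^(h-t))
                * ((n.choose h : ℝ≥0∞) * (c ^ t * c ^ (h - t)) * s ^ (n - h))
              = ((n.choose h : ℝ≥0∞) * (h.choose t : ℝ≥0∞))
                * (((a/c)^t * c^t) * ((b/c)^(h-t) * c^(h-t)) * s^(n-h)) from by ring,
              hcanc1, hcanc2]
            try ring
        _ = ((h.choose t : ℝ≥0∞) * (a/c)^t * (b/c)^(h-t))
            * ((n.choose h : ℝ≥0∞) * c ^ h * s ^ (n - h)) := by rw [← hch]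
    rw [hnum, mul_comm ((h.choose t : ℝ≥0∞) * (a/c)^t * (b/c)^(h-t)), ← mul_assoc,
      ENNReal.inv_mul_cancel hD0 hDtop, one_mul]
  · rw [if_neg hth, Nat.choose_eq_zero_of_lt (show h < t by omega)]
    simp
end

section
/- Given any four distinct points x_1, x_2, x_3, x_4 ∈ ℤ^2, there exists at least one of the following six pairings of ℤ^2 — X_j = {(x, x+e_j) : x, x+e_j appropriately matched} for j = 1,2,3,4 (pairing each point with its neighbor in direction e_j according to parity), Y = {((2a,b),(2a+1,b))}, and Y' = {((2a+1,b),(2a+2,b))} — such that every pair in that pairing contains at most one of the points x_1, x_2, x_3, x_4. -/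
/-- The pairing of `ℤ²` matching each point `x` with even coordinate sum to `x + e`
(and each point with odd coordinate sum to `x - e`), given as the "partner" map. -/
def pairDir (e : ℤ × ℤ) (x : ℤ × ℤ) : ℤ × ℤ :=
  if (x.1 + x.2) % 2 = 0 then x + e else x - e

/-- The pairing `Y` of `ℤ²` matching `(2a, b)` with `(2a+1, b)`, as a partner map. -/
def pairY (x : ℤ × ℤ) : ℤ × ℤ :=
  if x.1 % 2 = 0 then (x.1 + 1, x.2) else (x.1 - 1, x.2)

/-- The pairing `Y'` of `ℤ²` matching `(2a+1, b)` with `(2a+2, b)`, as a partner map. -/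
def pairY' (x : ℤ × ℤ) : ℤ × ℤ :=
  if x.1 % 2 = 0 then (x.1 - 1, x.2) else (x.1 + 1, x.2)

lemma card_le_four {α} [DecidableEq α] (A B C D : α) :
    ({A, B, C, D} : Finset α).card ≤ 4 := by
  have h1 := Finset.card_insert_le A ({B, C, D} : Finset α)
  have h2 := Finset.card_insert_le B ({C, D} : Finset α)
  have h3 := Finset.card_insert_le C ({D} : Finset α)
  simp only [Finset.card_singleton] at *
  omega

lemma pig4 {α} [DecidableEq α] {A B C D u v w z : α}
    (hu : u ∈ ({A, B, C, D} : Finset α)) (hv : v ∈ ({A, B, C, D} : Finset α))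
    (hw : w ∈ ({A, B, C, D} : Finset α)) (hz : z ∈ ({A, B, C, D} : Finset α))
    (huv : u ≠ v) (huw : u ≠ w) (huz : u ≠ z) (hvw : v ≠ w) (hvz : v ≠ z) (hwz : w ≠ z)
    {p : α} (hp : p ∈ ({A, B, C, D} : Finset α)) : p ∈ ({u, v, w, z} : Finset α) := by
  have hsub : ({u, v, w, z} : Finset α) ⊆ {A, B, C, D} := by
    simp [Finset.insert_subset_iff, hu, hv, hw, hz]
  have hcard : ({u, v, w, z} : Finset α).card = 4 := by
    rw [Finset.card_insert_of_notMem (by simp [huv, huw, huz]),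
        Finset.card_insert_of_notMem (by simp [hvw, hvz]),
        Finset.card_insert_of_notMem (by simp [hwz]),
        Finset.card_singleton]
  have heq := Finset.eq_of_subset_of_card_le hsub (by rw [hcard]; exact card_le_four A B C D)
  rw [heq]; exact hp

lemma offUnique {α} [DecidableEq α] {A B C D p q r s t : α}
    (hp : p ∈ ({A, B, C, D} : Finset α)) (hq : q ∈ ({A, B, C, D} : Finset α))
    (hr : r ∈ ({A, B, C, D} : Finset α))
    (hs : s ∈ ({A, B, C, D} : Finset α)) (ht : t ∈ ({A, B, C, D} : Finset α))
    (hpq : p ≠ q) (hpr : p ≠ r) (hqr : q ≠ r)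
    (hsp : s ≠ p) (hsq : s ≠ q) (hsr : s ≠ r)
    (htp : t ≠ p) (htq : t ≠ q) (htr : t ≠ r) : s = t := by
  have hsub : ({p, q, r} : Finset α) ⊆ {A, B, C, D} := by
    simp [Finset.insert_subset_iff, hp, hq, hr]
  have hcard : ({p, q, r} : Finset α).card = 3 := by
    rw [Finset.card_insert_of_notMem (by simp [hpq, hpr]),
        Finset.card_insert_of_notMem (by simp [hqr]),
        Finset.card_singleton]
  have hle : (({A, B, C, D} : Finset α) \ {p, q, r}).card ≤ 1 := by
    rw [Finset.card_sdiff_of_subset hsub, hcard]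
    have := card_le_four A B C D
    omega
  exact Finset.card_le_one.mp hle s
    (Finset.mem_sdiff.mpr ⟨hs, by simp [hsp, hsq, hsr]⟩) t
    (Finset.mem_sdiff.mpr ⟨ht, by simp [htp, htq, htr]⟩)

lemma main4 (A B C D : ℤ × ℤ)
    (h1 : ∃ p ∈ ({A, B, C, D} : Finset (ℤ × ℤ)), p + (1, 0) ∈ ({A, B, C, D} : Finset (ℤ × ℤ)) ∧
      (p.1 + p.2) % 2 = 0)
    (h3 : ∃ p ∈ ({A, B, C, D} : Finset (ℤ × ℤ)), p + (1, 0) ∈ ({A, B, C, D} : Finset (ℤ × ℤ)) ∧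
      (p.1 + p.2) % 2 = 1)
    (h2 : ∃ p ∈ ({A, B, C, D} : Finset (ℤ × ℤ)), p + (0, 1) ∈ ({A, B, C, D} : Finset (ℤ × ℤ)) ∧
      (p.1 + p.2) % 2 = 0)
    (h4 : ∃ p ∈ ({A, B, C, D} : Finset (ℤ × ℤ)), p + (0, 1) ∈ ({A, B, C, D} : Finset (ℤ × ℤ)) ∧
      (p.1 + p.2) % 2 = 1)
    (hY : ∃ p ∈ ({A, B, C, D} : Finset (ℤ × ℤ)), p + (1, 0) ∈ ({A, B, C, D} : Finset (ℤ × ℤ)) ∧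
      p.1 % 2 = 0)
    (hY' : ∃ p ∈ ({A, B, C, D} : Finset (ℤ × ℤ)), p + (1, 0) ∈ ({A, B, C, D} : Finset (ℤ × ℤ)) ∧
      p.1 % 2 = 1) :
    False := by
  obtain ⟨u, hu, hu', hupar⟩ := hY
  obtain ⟨z, hz, hz', hzpar⟩ := hY'
  by_cases hrow : u.2 = z.2
  · -- same row: at least three distinct collinear points
    obtain ⟨p₁, p₂, p₃, m1, m2, m3, d12, d13, d23, r1, r2, r3⟩ :
        ∃ p₁ p₂ p₃ : ℤ × ℤ, p₁ ∈ ({A, B, C, D} : Finset (ℤ × ℤ)) ∧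
          p₂ ∈ ({A, B, C, D} : Finset (ℤ × ℤ)) ∧ p₃ ∈ ({A, B, C, D} : Finset (ℤ × ℤ)) ∧
          p₁ ≠ p₂ ∧ p₁ ≠ p₃ ∧ p₂ ≠ p₃ ∧ p₁.2 = u.2 ∧ p₂.2 = u.2 ∧ p₃.2 = u.2 := by
      by_cases hc : z = u + (1, 0)
      · refine ⟨u, z, z + (1, 0), hu, hz, hz', ?_, ?_, ?_, rfl, hrow.symm, by simp [hrow]⟩
        · rw [hc]; intro h; rw [Prod.ext_iff] at h; simp at h
        · rw [hc]; intro h; rw [Prod.ext_iff] at h; simp at h <;> omega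
        · intro h; rw [Prod.ext_iff] at h; simp at h
      · by_cases hc2 : u = z + (1, 0)
        · refine ⟨z, u, u + (1, 0), hz, hu, hu', ?_, ?_, ?_, hrow.symm, rfl, by simp⟩
          · intro h; rw [Prod.ext_iff] at h; omega
          · rw [hc2]; intro h; rw [Prod.ext_iff] at h; simp at h <;> omega
          · intro h; rw [Prod.ext_iff] at h; simp at h
        · refine ⟨u, u + (1, 0), z, hu, hu', hz, ?_, ?_, ?_, rfl, by simp, hrow.symm⟩
          · intro h; rw [Prod.ext_iff] at h; simp at h
          · intro h; rw [Prod.ext_iff] at h; omega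
          · exact fun h => hc h.symm
    obtain ⟨a, ha, ha', hapar⟩ := h2
    obtain ⟨b, hb, hb', hbpar⟩ := h4
    have off : ∀ s t : ℤ × ℤ, s ∈ ({A, B, C, D} : Finset (ℤ × ℤ)) →
        t ∈ ({A, B, C, D} : Finset (ℤ × ℤ)) → s.2 ≠ u.2 → t.2 ≠ u.2 → s = t := by
      intro s t hs ht hs2 ht2
      refine offUnique m1 m2 m3 hs ht d12 d13 d23 ?_ ?_ ?_ ?_ ?_ ?_
      · intro h; exact hs2 (by rw [h, r1])
      · intro h; exact hs2 (by rw [h, r2])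
      · intro h; exact hs2 (by rw [h, r3])
      · intro h; exact ht2 (by rw [h, r1])
      · intro h; exact ht2 (by rw [h, r2])
      · intro h; exact ht2 (by rw [h, r3])
    have hA : a.2 = u.2 ∨ a.2 + 1 = u.2 := by
      by_contra hcon
      push_neg at hcon
      have h := off a (a + (0, 1)) ha ha' hcon.1 (by simpa using hcon.2)
      rw [Prod.ext_iff] at h; simp at h
    have hB : b.2 = u.2 ∨ b.2 + 1 = u.2 := by
      by_contra hcon
      push_neg at hcon
      have h := off b (b + (0, 1)) hb hb' hcon.1 (by simpa using hcon.2)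
      rw [Prod.ext_iff] at h; simp at h
    rcases hA with hA | hA <;> rcases hB with hB | hB
    · have h := off (a + (0, 1)) (b + (0, 1)) ha' hb' (by simp; omega) (by simp; omega)
      rw [Prod.ext_iff] at h; simp at h; omega
    · have h := off (a + (0, 1)) b ha' hb (by simp; omega) (by omega)
      rw [Prod.ext_iff] at h; simp at h; omega
    · have h := off a (b + (0, 1)) ha hb' (by omega) (by simp; omega)
      rw [Prod.ext_iff] at h; simp at h; omega
    · have h := off a b ha hb (by omega) (by omega)
      rw [Prod.ext_iff] at h; omega
  · -- different rows
    have n1 : u ≠ u + (1, 0) := by intro h; rw [Prod.ext_iff] at h; simp at h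
    have n2 : u ≠ z := fun h => hrow (congrArg Prod.snd h)
    have n3 : u ≠ z + (1, 0) := by
      intro h; apply hrow; have := congrArg Prod.snd h; simpa using this
    have n4 : u + (1, 0) ≠ z := by
      intro h; apply hrow; have := congrArg Prod.snd h; simpa using this
    have n5 : u + (1, 0) ≠ z + (1, 0) := by
      intro h; apply hrow; have := congrArg Prod.snd h; simpa using this
    have n6 : z ≠ z + (1, 0) := by intro h; rw [Prod.ext_iff] at h; simp at h
    have key : ∀ p ∈ ({A, B, C, D} : Finset (ℤ × ℤ)),
        p = u ∨ p = u + (1, 0) ∨ p = z ∨ p = z + (1, 0) := by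
      intro p hp
      have := pig4 hu hu' hz hz' n1 n2 n3 n4 n5 n6 hp
      simpa using this
    obtain ⟨w, hw, hw', hwpar⟩ := h1
    have h1' : (u.1 + u.2) % 2 = 0 ∨ (z.1 + z.2) % 2 = 0 := by
      have k1 := key w hw
      have k2 := key _ hw'
      rcases k1 with h | h | h | h <;> rcases k2 with g | g | g | g <;>
        rw [Prod.ext_iff] at h g <;> simp at h g <;> omega
    obtain ⟨w', hw2, hw2', hwpar2⟩ := h3
    have h3' : (u.1 + u.2) % 2 = 1 ∨ (z.1 + z.2) % 2 = 1 := by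
      have k1 := key w' hw2
      have k2 := key _ hw2'
      rcases k1 with h | h | h | h <;> rcases k2 with g | g | g | g <;>
        rw [Prod.ext_iff] at h g <;> simp at h g <;> omega
    obtain ⟨a, ha, ha', hapar⟩ := h2
    have k3 := key a ha
    have k4 := key _ ha'
    rcases h1' with h1' | h1' <;> rcases h3' with h3' | h3' <;>
      rcases k3 with h | h | h | h <;> rcases k4 with g | g | g | g <;>
        rw [Prod.ext_iff] at h g <;> simp at h g <;> omega

lemma extract_e1 {x : Fin 4 → ℤ × ℤ} (h : ∃ i j, i ≠ j ∧ pairDir (1, 0) (x i) = x j) :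
    ∃ i j : Fin 4, x j = x i + (1, 0) ∧ ((x i).1 + (x i).2) % 2 = 0 := by
  obtain ⟨i, j, -, hij⟩ := h
  by_cases hp : ((x i).1 + (x i).2) % 2 = 0
  · rw [pairDir, if_pos hp] at hij
    exact ⟨i, j, hij.symm, hp⟩
  · rw [pairDir, if_neg hp] at hij
    refine ⟨j, i, ?_, ?_⟩
    · rw [← hij]; ring
    · rw [← hij]; simp; omega

lemma extract_e3 {x : Fin 4 → ℤ × ℤ} (h : ∃ i j, i ≠ j ∧ pairDir (-1, 0) (x i) = x j) :
    ∃ i j : Fin 4, x j = x i + (1, 0) ∧ ((x i).1 + (x i).2) % 2 = 1 := by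
  obtain ⟨i, j, -, hij⟩ := h
  by_cases hp : ((x i).1 + (x i).2) % 2 = 0
  · rw [pairDir, if_pos hp] at hij
    refine ⟨j, i, by rw [← hij, Prod.ext_iff]; constructor <;> simp <;> omega, ?_⟩
    rw [← hij]; simp; omega
  · rw [pairDir, if_neg hp] at hij
    exact ⟨i, j, by rw [← hij, Prod.ext_iff]; constructor <;> simp <;> omega, by omega⟩

lemma extract_e2 {x : Fin 4 → ℤ × ℤ} (h : ∃ i j, i ≠ j ∧ pairDir (0, 1) (x i) = x j) :
    ∃ i j : Fin 4, x j = x i + (0, 1) ∧ ((x i).1 + (x i).2) % 2 = 0 := by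
  obtain ⟨i, j, -, hij⟩ := h
  by_cases hp : ((x i).1 + (x i).2) % 2 = 0
  · rw [pairDir, if_pos hp] at hij
    exact ⟨i, j, hij.symm, hp⟩
  · rw [pairDir, if_neg hp] at hij
    refine ⟨j, i, ?_, ?_⟩
    · rw [← hij]; ring
    · rw [← hij]; simp; omega

lemma extract_e4 {x : Fin 4 → ℤ × ℤ} (h : ∃ i j, i ≠ j ∧ pairDir (0, -1) (x i) = x j) :
    ∃ i j : Fin 4, x j = x i + (0, 1) ∧ ((x i).1 + (x i).2) % 2 = 1 := by
  obtain ⟨i, j, -, hij⟩ := h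
  by_cases hp : ((x i).1 + (x i).2) % 2 = 0
  · rw [pairDir, if_pos hp] at hij
    refine ⟨j, i, by rw [← hij, Prod.ext_iff]; constructor <;> simp <;> omega, ?_⟩
    rw [← hij]; simp; omega
  · rw [pairDir, if_neg hp] at hij
    exact ⟨i, j, by rw [← hij, Prod.ext_iff]; constructor <;> simp <;> omega, by omega⟩

lemma extract_Y {x : Fin 4 → ℤ × ℤ} (h : ∃ i j, i ≠ j ∧ pairY (x i) = x j) :
    ∃ i j : Fin 4, x j = x i + (1, 0) ∧ (x i).1 % 2 = 0 := by
  obtain ⟨i, j, -, hij⟩ := h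
  by_cases hp : (x i).1 % 2 = 0
  · rw [pairY, if_pos hp] at hij
    refine ⟨i, j, ?_, hp⟩
    rw [← hij]; rw [Prod.ext_iff]; simp
  · rw [pairY, if_neg hp] at hij
    refine ⟨j, i, ?_, ?_⟩
    · rw [← hij]; rw [Prod.ext_iff]; simp
    · rw [← hij]; simp; omega

lemma extract_Y' {x : Fin 4 → ℤ × ℤ} (h : ∃ i j, i ≠ j ∧ pairY' (x i) = x j) :
    ∃ i j : Fin 4, x j = x i + (1, 0) ∧ (x i).1 % 2 = 1 := by
  obtain ⟨i, j, -, hij⟩ := h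
  by_cases hp : (x i).1 % 2 = 0
  · rw [pairY', if_pos hp] at hij
    refine ⟨j, i, ?_, ?_⟩
    · rw [← hij]; rw [Prod.ext_iff]; simp
    · rw [← hij]; simp; omega
  · rw [pairY', if_neg hp] at hij
    refine ⟨i, j, ?_, by omega⟩
    rw [← hij]; rw [Prod.ext_iff]; simp

/-- Given any four distinct points of `ℤ²`, at least one of the six pairings
`X₁, X₂, X₃, X₄` (pairing in direction `e_j` according to parity), `Y`, `Y'` is such that
every pair of the pairing contains at most one of the four points. -/
theorem stmt14 (x : Fin 4 → ℤ × ℤ) (hx : Function.Injective x) :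
    ∃ f ∈ ({pairDir (1, 0), pairDir (0, 1), pairDir (-1, 0), pairDir (0, -1), pairY, pairY'} :
        Set ((ℤ × ℤ) → ℤ × ℤ)),
      ∀ i j : Fin 4, i ≠ j → f (x i) ≠ x j := by
  by_contra hcon
  push_neg at hcon
  have hmem : ∀ i : Fin 4, x i ∈ ({x 0, x 1, x 2, x 3} : Finset (ℤ × ℤ)) := by
    intro i; fin_cases i <;> simp
  have E1 := extract_e1 (hcon (pairDir (1, 0)) (by simp))
  have E2 := extract_e2 (hcon (pairDir (0, 1)) (by simp))
  have E3 := extract_e3 (hcon (pairDir (-1, 0)) (by simp))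
  have E4 := extract_e4 (hcon (pairDir (0, -1)) (by simp))
  have EY := extract_Y (hcon pairY (by simp))
  have EY' := extract_Y' (hcon pairY' (by simp))
  refine main4 (x 0) (x 1) (x 2) (x 3) ?_ ?_ ?_ ?_ ?_ ?_
  · obtain ⟨i, j, hj, hp⟩ := E1; exact ⟨x i, hmem i, by rw [← hj]; exact hmem j, hp⟩
  · obtain ⟨i, j, hj, hp⟩ := E3; exact ⟨x i, hmem i, by rw [← hj]; exact hmem j, hp⟩
  · obtain ⟨i, j, hj, hp⟩ := E2; exact ⟨x i, hmem i, by rw [← hj]; exact hmem j, hp⟩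
  · obtain ⟨i, j, hj, hp⟩ := E4; exact ⟨x i, hmem i, by rw [← hj]; exact hmem j, hp⟩
  · obtain ⟨i, j, hj, hp⟩ := EY; exact ⟨x i, hmem i, by rw [← hj]; exact hmem j, hp⟩
  · obtain ⟨i, j, hj, hp⟩ := EY'; exact ⟨x i, hmem i, by rw [← hj]; exact hmem j, hp⟩
end
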